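/- arXiv:2101.01982 — 4 statements merged into one kernel-verified Lean document; each statement's English description precedes it below -/
import Mathlib

section
/- Let 0 < p < 1. For every n ≥ 1 and every y ∈ (0,1], the m_p × λ measure of the set {(ω,x) ∈ {0,1}^ℕ × [0,1] : θ_n(ω,x) ≤ y} equals p·F_L(y) + (1−p)·F_A(y), where F_L(y) = Σ_{k=2}^{⌊1/y⌋+1} y/k + 1/(⌊1/y⌋+1) and F_A(y) = Σ_{k=2}^{⌊1/y⌋} y/(k−1) + 1/⌊1/y⌋. -/
open MeasureTheory Filter Set
open scoped Classical ENNReal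

noncomputable section

/-- The Lüroth map `T_L`. -/
def TL (x : ℝ) : ℝ :=
  if x = 0 then 0
  else if x = 1 then 1
  else (⌈1/x⌉ : ℝ) * ((⌈1/x⌉ : ℝ) - 1) * x - ((⌈1/x⌉ : ℝ) - 1)

/-- The alternating Lüroth map `T_A`. -/
def TA (x : ℝ) : ℝ := 1 - TL x

/-- `z_n⁺ = z_n + c·z_n·z_{n-1}`. -/
def zp (c : ℝ) (n : ℕ) : ℝ := 1/(n:ℝ) + c * (1/(n:ℝ)) * (1/((n:ℝ) - 1))

/-- `z_n⁻ = z_n − c·z_n·z_{n+1}`. -/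
def zm (c : ℝ) (n : ℕ) : ℝ := 1/(n:ℝ) - c * (1/(n:ℝ)) * (1/((n:ℝ) + 1))

/-- The maps `T_{0,c}` (`j = false`) and `T_{1,c}` (`j = true`); for `c = 0` the points
`0` and `z_n`, `n ≥ 2`, are additionally sent to `1`. -/
def Tc (j : Bool) (c : ℝ) (x : ℝ) : ℝ :=
  if c = 0 ∧ (x = 0 ∨ ∃ n : ℕ, 2 ≤ n ∧ x = 1/(n:ℝ)) then 1
  else if x = 1 then 1
  else if (j = false ∧ ∃ n : ℕ, 2 ≤ n ∧ 1/(n:ℝ) ≤ x ∧ x < zp c n) ∨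
          (j = true ∧ ∃ n : ℕ, 2 ≤ n ∧ 1/(n:ℝ) ≤ x ∧ x ≤ zm c (n-1)) then TA x
  else TL x

/-- Random iteration: `Tom c ω n = T_{ω_n,c} ∘ ⋯ ∘ T_{ω_1,c}` (paths 0-indexed). -/
def Tom (c : ℝ) (ω : ℕ → Bool) : ℕ → ℝ → ℝ
  | 0 => fun x => x
  | n+1 => fun x => Tc (ω n) c (Tom c ω n x)

/-- The digit `d_{n+1}(ω,x)` (0-indexed: `dig c ω x n` is the digit determined by `T_ω^n x`). -/
def dig (c : ℝ) (ω : ℕ → Bool) (x : ℝ) (n : ℕ) : ℕ :=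
  if Tom c ω n x = 1 then 2 else (⌈1/(Tom c ω n x)⌉).toNat

/-- The switch region `S = [c,1] ∩ ⋃_{n≥2} [z_n⁺, z_{n-1}⁻]`. -/
def SwitchS (c : ℝ) : Set ℝ :=
  {y | y ∈ Set.Icc c 1 ∧ ∃ n : ℕ, 2 ≤ n ∧ zp c n ≤ y ∧ y ≤ zm c (n-1)}

/-- The sign `s_{n+1}(ω,x)` (0-indexed: `sgn c ω x n` is the sign determined by `T_ω^n x`). -/
def sgn (c : ℝ) (ω : ℕ → Bool) (x : ℝ) (n : ℕ) : ℕ :=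
  if c = 0 then (if ω n then 1 else 0)
  else if (ω n = false ∧ Tom c ω n x ∈ SwitchS c) ∨
          (∃ d : ℕ, 1 ≤ d ∧ zm c d < Tom c ω n x ∧ Tom c ω n x < 1/(d:ℝ)) ∨
          Tom c ω n x = 1 then 0
  else 1

/-- The c-Lüroth expansion: `expansion c ω x n = (s_{n+1}(ω,x), d_{n+1}(ω,x))`. -/
def expansion (c : ℝ) (ω : ℕ → Bool) (x : ℝ) (n : ℕ) : ℕ × ℕ :=
  (sgn c ω x n, dig c ω x n)

/-- A sequence is ultimately periodic if some tail is periodic. -/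
def UltimatelyPeriodic {α : Type*} (a : ℕ → α) : Prop :=
  ∃ N r : ℕ, 1 ≤ r ∧ ∀ n, N ≤ n → a (n + r) = a n

/-- The `n`-th convergent `p_n/q_n(ω,x)`. -/
def conv (c : ℝ) (ω : ℕ → Bool) (x : ℝ) (n : ℕ) : ℝ :=
  ∑ k ∈ Finset.range n,
    (-1 : ℝ) ^ (∑ i ∈ Finset.range k, sgn c ω x i) *
      ((dig c ω x k : ℝ) - 1 + (sgn c ω x k : ℝ)) /
      (∏ i ∈ Finset.range (k+1), ((dig c ω x i : ℝ) * ((dig c ω x i : ℝ) - 1)))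

/-- The value `Σ_{n≥1} (−1)^{s_1+⋯+s_{n−1}} (d_n − 1 + s_n)/∏_{i≤n} d_i(d_i−1)` of a
sign-digit sequence (0-indexed). -/
def lurothSum (a : ℕ → ℕ × ℕ) : ℝ :=
  ∑' n : ℕ,
    (-1 : ℝ) ^ (∑ i ∈ Finset.range n, (a i).1) *
      (((a n).2 : ℝ) - 1 + ((a n).1 : ℝ)) /
      (∏ i ∈ Finset.range (n+1), (((a i).2 : ℝ) * (((a i).2 : ℝ) - 1)))

/-- The Bernoulli `(p, 1-p)` product measure on `{0,1}^ℕ` (coordinate `0 ↔ false` has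
probability `p`). -/
def IsBernoulli (p : ℝ) (m : Measure (ℕ → Bool)) : Prop :=
  IsProbabilityMeasure m ∧
  ∀ (n : ℕ) (f : Fin n → Bool),
    m {ω : ℕ → Bool | ∀ i : Fin n, ω i = f i} =
      ∏ i : Fin n, ENNReal.ofReal (if f i then 1 - p else p)

/-- The random 0-Lüroth transformation `L_0`. -/
def L0 (q : (ℕ → Bool) × ℝ) : (ℕ → Bool) × ℝ := (fun n => q.1 (n+1), Tc (q.1 0) 0 q.2)

/-- The `n`-th approximation coefficient `θ_n(ω,x)` (1-indexed `n`). -/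
def theta (ω : ℕ → Bool) (x : ℝ) (n : ℕ) : ℝ :=
  ((dig 0 ω x (n-1) : ℝ) - (sgn 0 ω x (n-1) : ℝ)) *
    (∏ i ∈ Finset.range (n-1), ((dig 0 ω x i : ℝ) * ((dig 0 ω x i : ℝ) - 1))) *
    |x - conv 0 ω x n|

/-- Distribution function `F_L` of the Lüroth approximation coefficients. -/
def FL (y : ℝ) : ℝ := (∑ k ∈ Finset.Icc 2 (⌊1/y⌋₊ + 1), y / (k:ℝ)) + 1/((⌊1/y⌋₊ : ℝ) + 1)

/-- Distribution function `F_A` of the alternating Lüroth approximation coefficients. -/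
def FA (y : ℝ) : ℝ := (∑ k ∈ Finset.Icc 2 ⌊1/y⌋₊, y / ((k:ℝ) - 1)) + 1/(⌊1/y⌋₊ : ℝ)

/-- A sequence over the alphabet `A` is universal if every finite word over `A` occurs
in it as a consecutive block. -/
def IsUniversal (A : Set (ℕ × ℕ)) (e : ℕ → ℕ × ℕ) : Prop :=
  ∀ (m : ℕ) (w : Fin m → ℕ × ℕ), (∀ i, w i ∈ A) →
    ∃ k : ℕ, ∀ i : Fin m, e (k + (i : ℕ)) = w i

/-- `c`-Lüroth admissible sequences. -/
def Admissible (c : ℝ) (a : ℕ → ℕ × ℕ) : Prop :=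
  (∀ n, (a n).1 ≤ 1 ∧ 2 ≤ (a n).2 ∧ (a n).2 ≤ ⌈1/c⌉₊) ∧
  (∀ k : ℕ, lurothSum (fun n => a (k + n)) ∈ Set.Icc c 1) ∧
  ¬ ∃ (N d : ℕ), 2 ≤ d ∧ d < ⌈1/c⌉₊ ∧ a N = (0, d+1) ∧ ∀ n, N < n → a n = (0, 2)

namespace Part1

/-! ### Telescoping sums -/

lemma telescope_partial (N : ℕ) (m : ℕ) :
    ∑ k ∈ Finset.range m, (1:ℝ)/(((k:ℝ)+N+2)*((k:ℝ)+N+1))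
      = 1/((N:ℝ)+1) - 1/((N:ℝ)+1+m) := by
  induction m with
  | zero => simp
  | succ m ih =>
    rw [Finset.sum_range_succ, ih]
    have h1 : ((N:ℝ)+1+m) ≠ 0 := by positivity
    have h2 : ((N:ℝ)+1+((m:ℝ)+1)) ≠ 0 := by positivity
    have h3 : ((m:ℝ)+(N:ℝ)+2) ≠ 0 := by positivity
    have h4 : ((m:ℝ)+(N:ℝ)+1) ≠ 0 := by positivity
    push_cast
    field_simp
    ring

lemma telescope_hasSum (N : ℕ) :
    HasSum (fun k : ℕ => (1:ℝ)/(((k:ℝ)+N+2)*((k:ℝ)+N+1))) (1/((N:ℝ)+1)) := by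
  have hnn : ∀ k : ℕ, 0 ≤ (1:ℝ)/(((k:ℝ)+N+2)*((k:ℝ)+N+1)) := by
    intro k; positivity
  rw [hasSum_iff_tendsto_nat_of_nonneg hnn]
  have : (fun m : ℕ => ∑ k ∈ Finset.range m, (1:ℝ)/(((k:ℝ)+N+2)*((k:ℝ)+N+1)))
      = fun m : ℕ => 1/((N:ℝ)+1) - 1/((N:ℝ)+1+m) := by
    funext m; exact telescope_partial N m
  rw [this]
  have h0 : Filter.Tendsto (fun m : ℕ => 1/((N:ℝ)+1+m)) Filter.atTop (nhds 0) := by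
    simp only [one_div]
    apply Filter.Tendsto.inv_tendsto_atTop
    apply Filter.tendsto_atTop_add_const_left
    exact tendsto_natCast_atTop_atTop
  simpa using ((tendsto_const_nhds (x := 1/((N:ℝ)+1))).sub h0)

/-! ### Branch intervals -/

lemma mem_branch {x : ℝ} (h0 : 0 < x) (h1 : x < 1) :
    ∃ k : ℕ, 1/((k:ℝ)+2) ≤ x ∧ x < 1/((k:ℝ)+1) := by
  set n := ⌈1/x⌉₊ with hn
  have hx1 : (1:ℝ) < 1/x := one_lt_one_div h0 h1
  have hn2 : 2 ≤ n := by
    have : 1 < n := Nat.lt_ceil.2 (by exact_mod_cast hx1)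
    omega
  refine ⟨n - 2, ?_, ?_⟩
  · have hle : 1/x ≤ (n:ℝ) := Nat.le_ceil _
    have : ((n-2:ℕ):ℝ) + 2 = (n:ℝ) := by
      have : ((n-2:ℕ):ℝ) = (n:ℝ) - 2 := by
        push_cast [Nat.cast_sub hn2]; ring
      rw [this]; ring
    rw [this]
    rw [one_div_le (by positivity) h0]
    exact hle
  · have hlt : ((n:ℝ) - 1) < 1/x := by
      have : (n - 1 : ℕ) < ⌈1/x⌉₊ := by omega
      have := Nat.lt_ceil.1 this
      have hc : ((n-1:ℕ):ℝ) = (n:ℝ) - 1 := by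
        push_cast [Nat.cast_sub (by omega : 1 ≤ n)]; ring
      rwa [hc] at this
    have hc2 : ((n-2:ℕ):ℝ) + 1 = (n:ℝ) - 1 := by
      push_cast [Nat.cast_sub hn2]; ring
    have hn1 : (0:ℝ) < (n:ℝ) - 1 := by
      have : (2:ℝ) ≤ (n:ℝ) := by exact_mod_cast hn2
      linarith
    rw [hc2, lt_one_div h0 hn1]
    exact hlt

lemma branch_pos (k : ℕ) : (0:ℝ) < 1/((k:ℝ)+2) := by positivity

lemma branch_lt (k : ℕ) : (1:ℝ)/((k:ℝ)+2) < 1/((k:ℝ)+1) := by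
  apply one_div_lt_one_div_of_lt <;> [positivity; linarith]

lemma branch_le_one (k : ℕ) : (1:ℝ)/((k:ℝ)+1) ≤ 1 := by
  rw [div_le_one (by positivity)]; linarith

lemma ceil_on_branch {x : ℝ} {k : ℕ} (h1 : 1/((k:ℝ)+2) ≤ x) (h2 : x < 1/((k:ℝ)+1)) :
    ⌈1/x⌉ = ((k:ℤ)+2) := by
  have hx0 : 0 < x := lt_of_lt_of_le (branch_pos k) h1
  rw [Int.ceil_eq_iff]
  constructor
  · have : ((k:ℝ)+1) < 1/x := by
      rw [lt_one_div (by positivity) hx0]; exact h2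
    push_cast; linarith
  · have : 1/x ≤ ((k:ℝ)+2) := by
      rw [one_div_le hx0 (by positivity)]; exact h1
    push_cast; linarith

lemma ceilNat_on_branch {x : ℝ} {k : ℕ} (h1 : 1/((k:ℝ)+2) ≤ x) (h2 : x < 1/((k:ℝ)+1)) :
    (⌈1/x⌉).toNat = k + 2 := by
  rw [ceil_on_branch h1 h2]
  omega

end Part1
namespace Part1

/-! ### The maps on branches -/

lemma TL_on_branch {x : ℝ} {k : ℕ} (h1 : 1/((k:ℝ)+2) ≤ x) (h2 : x < 1/((k:ℝ)+1)) :
    TL x = ((k:ℝ)+2)*((k:ℝ)+1)*x - ((k:ℝ)+1) := by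
  have hx0 : 0 < x := lt_of_lt_of_le (branch_pos k) h1
  have hx1 : x < 1 := lt_of_lt_of_le h2 (branch_le_one k)
  unfold TL
  rw [if_neg (by linarith), if_neg (by linarith), ceil_on_branch h1 h2]
  push_cast; ring

lemma not_special_of_branch {x : ℝ} {k : ℕ} (h1 : 1/((k:ℝ)+2) < x) (h2 : x < 1/((k:ℝ)+1))
    (hns : ∀ j : ℕ, x ≠ 1/((j:ℝ)+1)) : True := trivial

lemma zp_zero (n : ℕ) : zp 0 n = 1/(n:ℝ) := by unfold zp; ring
lemma zm_zero (n : ℕ) : zm 0 n = 1/(n:ℝ) := by unfold zm; ring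

/-- On a branch interval (with no special points), `Tc j 0` is `TL` or `TA`. -/
lemma Tc_on_branch {x : ℝ} {k : ℕ} (j : Bool) (h1 : 1/((k:ℝ)+2) < x) (h2 : x < 1/((k:ℝ)+1)) :
    Tc j 0 x = if j then TA x else TL x := by
  have hx0 : 0 < x := lt_trans (branch_pos k) h1
  have hx1 : x < 1 := lt_of_lt_of_le h2 (branch_le_one k)
  have hns : ¬ (x = 0 ∨ ∃ n : ℕ, 2 ≤ n ∧ x = 1/(n:ℝ)) := by
    rintro (rfl | ⟨n, hn2, rfl⟩)
    · exact absurd hx0 (lt_irrefl 0)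
    · -- 1/(k+2) < 1/n < 1/(k+1) impossible for integers
      have hk2 : ((k:ℝ)+2) ≠ 0 := by positivity
      have hnR : (0:ℝ) < (n:ℝ) := by positivity
      have ha : (n:ℝ) < (k:ℝ)+2 := lt_of_one_div_lt_one_div (by positivity) h1
      have hb : ((k:ℝ)+1) < (n:ℝ) := lt_of_one_div_lt_one_div hnR h2
      have : k + 1 < n := by exact_mod_cast hb
      have : n < k + 2 := by exact_mod_cast ha
      omega
  unfold Tc
  rw [if_neg (by rintro ⟨-, h⟩; exact hns h), if_neg (by linarith)]
  cases j with
  | false =>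
    rw [if_neg, if_neg]
    · simp
    · rintro (⟨-, n, hn2, hle, hlt⟩ | ⟨h, -⟩)
      · rw [zp_zero] at hlt; exact absurd hle (not_le.2 hlt)
      · simp at h
  | true =>
    rw [if_pos, if_pos rfl]
    right
    refine ⟨rfl, k+2, by omega, ?_, ?_⟩
    · push_cast; linarith
    · rw [zm_zero]
      have : ((k+2-1 : ℕ):ℝ) = (k:ℝ)+1 := by push_cast; ring
      rw [this]; linarith

/-! ### Interval volume helpers -/

open MeasureTheory Set

lemma vol_Ioo_inter_Iic {a b c : ℝ} (hac : a ≤ c) (hab : a ≤ b) :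
    volume (Ioo a b ∩ Iic c) = ENNReal.ofReal (min b c - a) := by
  rcases le_total b c with h | h
  · have : Ioo a b ∩ Iic c = Ioo a b := by
      apply inter_eq_left.2
      intro x hx; exact le_trans (le_of_lt hx.2) h
    rw [this, Real.volume_Ioo, min_eq_left h]
  · have hsub1 : Ioo a c ⊆ Ioo a b ∩ Iic c := by
      intro x hx
      rcases le_or_gt c b with h' | h'
      · exact ⟨⟨hx.1, lt_of_lt_of_le hx.2 h⟩, le_of_lt hx.2⟩
      · exact ⟨⟨hx.1, lt_of_lt_of_le hx.2 h⟩, le_of_lt hx.2⟩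
    have hsub2 : Ioo a b ∩ Iic c ⊆ Icc a c := by
      rintro x ⟨hx1, hx2⟩; exact ⟨le_of_lt hx1.1, hx2⟩
    have h1 := measure_mono (μ := volume) hsub1
    have h2 := measure_mono (μ := volume) hsub2
    rw [Real.volume_Ioo] at h1
    rw [Real.volume_Icc] at h2
    rw [min_eq_right h]
    exact le_antisymm h2 h1

lemma vol_Ioo_inter_Ici {a b c : ℝ} (hcb : c ≤ b) (hab : a ≤ b) :
    volume (Ioo a b ∩ Ici c) = ENNReal.ofReal (b - max a c) := by
  rcases le_total c a with h | h
  · have : Ioo a b ∩ Ici c = Ioo a b := by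
      apply inter_eq_left.2
      intro x hx; exact le_trans h (le_of_lt hx.1)
    rw [this, Real.volume_Ioo, max_eq_left h]
  · have hsub1 : Ioo c b ⊆ Ioo a b ∩ Ici c := by
      intro x hx
      exact ⟨⟨lt_of_le_of_lt h hx.1, hx.2⟩, le_of_lt hx.1⟩
    have hsub2 : Ioo a b ∩ Ici c ⊆ Icc c b := by
      rintro x ⟨hx1, hx2⟩; exact ⟨hx2, le_of_lt hx1.2⟩
    have h1 := measure_mono (μ := volume) hsub1
    have h2 := measure_mono (μ := volume) hsub2
    rw [Real.volume_Ioo] at h1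
    rw [Real.volume_Icc] at h2
    rw [max_eq_right h]
    exact le_antisymm h2 h1

end Part1
namespace Part1
open MeasureTheory Set

set_option maxHeartbeats 1000000

/-! ### Measurability -/

lemma measurable_natcast : Measurable (fun n : ℕ => (n:ℝ)) := measurable_of_countable _

lemma measurable_ceilcast : Measurable (fun x : ℝ => ((⌈1/x⌉ : ℤ) : ℝ)) := by
  have h1 : Measurable (fun x : ℝ => 1/x) := measurable_const.div measurable_id
  exact (measurable_of_countable (fun z : ℤ => (z:ℝ))).comp (Int.measurable_ceil.comp h1)

lemma measurable_TL : Measurable TL := by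
  unfold TL
  apply Measurable.ite (measurableSet_eq_fun measurable_id measurable_const) measurable_const
  apply Measurable.ite (measurableSet_eq_fun measurable_id measurable_const) measurable_const
  exact ((measurable_ceilcast.mul (measurable_ceilcast.sub measurable_const)).mul
    measurable_id).sub (measurable_ceilcast.sub measurable_const)

lemma measurable_TA : Measurable TA := measurable_const.sub measurable_TL

lemma specialSet_countable : ({x : ℝ | x = 0 ∨ ∃ n : ℕ, 2 ≤ n ∧ x = 1/(n:ℝ)}).Countable := by
  apply Set.Countable.mono _ (Set.Countable.union (s := {(0:ℝ)})
    (t := Set.range (fun n : ℕ => 1/(n:ℝ))) (Set.countable_singleton 0) (Set.countable_range _))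
  rintro x (rfl | ⟨n, -, rfl⟩)
  · exact Or.inl rfl
  · exact Or.inr ⟨n, rfl⟩

lemma measurable_Tc (j : Bool) : Measurable (Tc j 0) := by
  unfold Tc
  have hms : MeasurableSet {x : ℝ | (0:ℝ) = 0 ∧ (x = 0 ∨ ∃ n : ℕ, 2 ≤ n ∧ x = 1/(n:ℝ))} := by
    have : {x : ℝ | (0:ℝ) = 0 ∧ (x = 0 ∨ ∃ n : ℕ, 2 ≤ n ∧ x = 1/(n:ℝ))}
        = {x : ℝ | x = 0 ∨ ∃ n : ℕ, 2 ≤ n ∧ x = 1/(n:ℝ)} := by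
      ext x; simp
    rw [this]
    exact specialSet_countable.measurableSet
  apply Measurable.ite hms measurable_const
  apply Measurable.ite (measurableSet_eq_fun measurable_id measurable_const) measurable_const
  apply Measurable.ite _ measurable_TA measurable_TL
  have : {x : ℝ | (j = false ∧ ∃ n : ℕ, 2 ≤ n ∧ 1/(n:ℝ) ≤ x ∧ x < zp 0 n) ∨
      (j = true ∧ ∃ n : ℕ, 2 ≤ n ∧ 1/(n:ℝ) ≤ x ∧ x ≤ zm 0 (n-1))}
      = (⋃ n : ℕ, {x : ℝ | j = false ∧ 2 ≤ n ∧ 1/(n:ℝ) ≤ x ∧ x < zp 0 n}) ∪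
        (⋃ n : ℕ, {x : ℝ | j = true ∧ 2 ≤ n ∧ 1/(n:ℝ) ≤ x ∧ x ≤ zm 0 (n-1)}) := by
    ext x
    simp only [Set.mem_setOf_eq, Set.mem_union, Set.mem_iUnion]
    constructor
    · rintro (⟨h, n, hn⟩ | ⟨h, n, hn⟩)
      · exact Or.inl ⟨n, h, hn⟩
      · exact Or.inr ⟨n, h, hn⟩
    · rintro (⟨n, h, hn⟩ | ⟨n, h, hn⟩)
      · exact Or.inl ⟨h, n, hn⟩
      · exact Or.inr ⟨h, n, hn⟩
  rw [this]
  apply MeasurableSet.union <;> apply MeasurableSet.iUnion <;> intro n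
  · by_cases hj : j = false
    · by_cases h2 : 2 ≤ n
      · have : {x : ℝ | j = false ∧ 2 ≤ n ∧ 1/(n:ℝ) ≤ x ∧ x < zp 0 n}
            = Ico (1/(n:ℝ)) (zp 0 n) := by
          ext x; simp only [Set.mem_setOf_eq, Set.mem_Ico, hj, h2, true_and]
        rw [this]; exact measurableSet_Ico
      · have : {x : ℝ | j = false ∧ 2 ≤ n ∧ 1/(n:ℝ) ≤ x ∧ x < zp 0 n} = ∅ := by
          ext x; simp [h2]
        rw [this]; exact MeasurableSet.empty
    · have : {x : ℝ | j = false ∧ 2 ≤ n ∧ 1/(n:ℝ) ≤ x ∧ x < zp 0 n} = ∅ := by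
        ext x; simp [hj]
      rw [this]; exact MeasurableSet.empty
  · by_cases hj : j = true
    · by_cases h2 : 2 ≤ n
      · have : {x : ℝ | j = true ∧ 2 ≤ n ∧ 1/(n:ℝ) ≤ x ∧ x ≤ zm 0 (n-1)}
            = Icc (1/(n:ℝ)) (zm 0 (n-1)) := by
          ext x; simp only [Set.mem_setOf_eq, Set.mem_Icc, hj, h2, true_and]
        rw [this]; exact measurableSet_Icc
      · have : {x : ℝ | j = true ∧ 2 ≤ n ∧ 1/(n:ℝ) ≤ x ∧ x ≤ zm 0 (n-1)} = ∅ := by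
          ext x; simp [h2]
        rw [this]; exact MeasurableSet.empty
    · have : {x : ℝ | j = true ∧ 2 ≤ n ∧ 1/(n:ℝ) ≤ x ∧ x ≤ zm 0 (n-1)} = ∅ := by
        ext x; simp [hj]
      rw [this]; exact MeasurableSet.empty

lemma measurable_coord (n : ℕ) : Measurable (fun q : (ℕ → Bool) × ℝ => q.1 n) :=
  (measurable_pi_apply n).comp measurable_fst

lemma measurableSet_coord (n : ℕ) : MeasurableSet {q : (ℕ → Bool) × ℝ | q.1 n = true} :=
  measurable_coord n (measurableSet_singleton true)

lemma measurable_Tom (n : ℕ) : Measurable (fun q : (ℕ → Bool) × ℝ => Tom 0 q.1 n q.2) := by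
  induction n with
  | zero => exact measurable_snd
  | succ n ih =>
    have : (fun q : (ℕ → Bool) × ℝ => Tom 0 q.1 (n+1) q.2)
        = fun q => if q.1 n = true then Tc true 0 (Tom 0 q.1 n q.2)
            else Tc false 0 (Tom 0 q.1 n q.2) := by
      funext q
      show Tc (q.1 n) 0 (Tom 0 q.1 n q.2) = _
      cases hq : q.1 n <;> simp [hq]
    rw [this]
    exact Measurable.ite (measurableSet_coord n) ((measurable_Tc true).comp ih)
      ((measurable_Tc false).comp ih)

lemma measurable_dig (n : ℕ) : Measurable (fun q : (ℕ → Bool) × ℝ => dig 0 q.1 q.2 n) := by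
  unfold dig
  have houter : Measurable (fun t : ℝ => if t = 1 then 2 else (⌈1/t⌉).toNat) := by
    apply Measurable.ite (measurableSet_eq_fun measurable_id measurable_const) measurable_const
    exact (measurable_of_countable Int.toNat).comp
      (Int.measurable_ceil.comp (measurable_const.div measurable_id))
  exact houter.comp (measurable_Tom n)

lemma measurable_digR (n : ℕ) :
    Measurable (fun q : (ℕ → Bool) × ℝ => ((dig 0 q.1 q.2 n : ℕ) : ℝ)) :=
  measurable_natcast.comp (measurable_dig n)

lemma sgn_zero_eq (ω : ℕ → Bool) (x : ℝ) (n : ℕ) : sgn 0 ω x n = if ω n then 1 else 0 := by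
  unfold sgn; rw [if_pos rfl]

lemma measurable_sgn (n : ℕ) : Measurable (fun q : (ℕ → Bool) × ℝ => sgn 0 q.1 q.2 n) := by
  have : (fun q : (ℕ → Bool) × ℝ => sgn 0 q.1 q.2 n)
      = fun q => if q.1 n = true then 1 else 0 := by
    funext q; rw [sgn_zero_eq]
  rw [this]
  exact Measurable.ite (measurableSet_coord n) measurable_const measurable_const

lemma measurable_sgnR (n : ℕ) :
    Measurable (fun q : (ℕ → Bool) × ℝ => ((sgn 0 q.1 q.2 n : ℕ) : ℝ)) :=
  measurable_natcast.comp (measurable_sgn n)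

lemma measurable_P (i : ℕ) : Measurable (fun q : (ℕ → Bool) × ℝ =>
    ((dig 0 q.1 q.2 i : ℕ) : ℝ) * (((dig 0 q.1 q.2 i : ℕ) : ℝ) - 1)) :=
  (measurable_digR i).mul ((measurable_digR i).sub measurable_const)

lemma measurable_conv (n : ℕ) : Measurable (fun q : (ℕ → Bool) × ℝ => conv 0 q.1 q.2 n) := by
  unfold conv
  apply Finset.measurable_sum
  intro k _
  apply Measurable.div
  · apply Measurable.mul
    · have he : Measurable (fun q : (ℕ → Bool) × ℝ => ∑ i ∈ Finset.range k, sgn 0 q.1 q.2 i) :=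
        Finset.measurable_sum _ (fun i _ => measurable_sgn i)
      exact (measurable_of_countable (fun n : ℕ => ((-1:ℝ))^n)).comp he
    · exact ((measurable_digR k).sub measurable_const).add (measurable_sgnR k)
  · exact Finset.measurable_prod _ (fun i _ => measurable_P i)

lemma measurable_theta (n : ℕ) : Measurable (fun q : (ℕ → Bool) × ℝ => theta q.1 q.2 n) := by
  unfold theta
  apply Measurable.mul
  · exact ((measurable_digR (n-1)).sub (measurable_sgnR (n-1))).mul
      (Finset.measurable_prod _ (fun i _ => measurable_P i))
  · exact (measurable_snd.sub (measurable_conv n)).abs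

lemma measurable_theta_x (ω : ℕ → Bool) (n : ℕ) : Measurable (fun x : ℝ => theta ω x n) := by
  have h := (measurable_theta n).comp
    (measurable_const.prodMk measurable_id : Measurable fun x : ℝ => (ω, x))
  exact h

end Part1
namespace Part1
open MeasureTheory Set

set_option maxHeartbeats 1000000

/-! ### Volume of affine preimages -/

lemma vol_affine_preimage (a b : ℝ) (ha : a ≠ 0) (S : Set ℝ) :
    volume ((fun x => a*x + b) ⁻¹' S) = ENNReal.ofReal |a⁻¹| * volume S := by
  have h1 : (fun x : ℝ => a*x + b) ⁻¹' S = (fun x : ℝ => a*x) ⁻¹' ((fun u : ℝ => b + u) ⁻¹' S) := by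
    ext x; simp [add_comm]
  rw [h1, Real.volume_preimage_mul_left ha, measure_preimage_add]

/-! ### The bad (countable) set and branch decomposition -/

def Ebad : Set ℝ := {0, 1} ∪ Set.range (fun k : ℕ => 1/((k:ℝ)+1))

lemma Ebad_countable : Ebad.Countable :=
  ((Set.countable_singleton (1:ℝ)).insert 0).union (Set.countable_range _)

lemma Ebad_vol : volume Ebad = 0 := Ebad_countable.measure_zero _

lemma mem_branch_Ioo {x : ℝ} (hx : x ∈ Icc (0:ℝ) 1) (hE : x ∉ Ebad) :
    ∃ k : ℕ, x ∈ Ioo (1/((k:ℝ)+2)) (1/((k:ℝ)+1)) := by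
  have h0 : x ≠ 0 := fun h => hE (Or.inl (Or.inl h))
  have h1 : x ≠ 1 := fun h => hE (Or.inl (Or.inr h))
  have hx0 : 0 < x := lt_of_le_of_ne hx.1 (Ne.symm h0)
  have hx1 : x < 1 := lt_of_le_of_ne hx.2 h1
  obtain ⟨k, hk1, hk2⟩ := mem_branch hx0 hx1
  refine ⟨k, lt_of_le_of_ne hk1 ?_, hk2⟩
  intro h
  apply hE
  right
  exact ⟨k+1, by rw [← h]; push_cast; ring⟩

lemma branch_disjoint_aux {k l : ℕ} (h : k < l) :
    Disjoint (Ioo (1/((k:ℝ)+2)) (1/((k:ℝ)+1))) (Ioo (1/((l:ℝ)+2)) (1/((l:ℝ)+1))) := by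
  apply Set.disjoint_left.2
  rintro x ⟨hx1, hx2⟩ ⟨hy1, hy2⟩
  have : (1:ℝ)/((k:ℝ)+2) ≥ 1/((l:ℝ)+1) := by
    apply one_div_le_one_div_of_le (by positivity)
    have : (k:ℝ) + 1 ≤ (l:ℝ) := by exact_mod_cast h
    linarith
  linarith

lemma branch_disjoint : Pairwise (Function.onFun Disjoint
    (fun k : ℕ => Ioo (1/((k:ℝ)+2)) (1/((k:ℝ)+1)))) := by
  intro k l hkl
  rcases lt_or_gt_of_ne hkl with h | h
  · exact branch_disjoint_aux h
  · exact (branch_disjoint_aux h).symm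

lemma Ioo_subset_Icc01 (k : ℕ) : Ioo (1/((k:ℝ)+2)) (1/((k:ℝ)+1)) ⊆ Icc (0:ℝ) 1 :=
  fun x hx => ⟨le_of_lt (lt_trans (branch_pos k) hx.1),
    le_trans (le_of_lt hx.2) (branch_le_one k)⟩

lemma vol_decomp (P : Set ℝ) (J : ℕ → Set ℝ) (hJm : ∀ k : ℕ, MeasurableSet (J k))
    (heq : ∀ k : ℕ, P ∩ Ioo (1/((k:ℝ)+2)) (1/((k:ℝ)+1)) = J k) :
    volume (P ∩ Icc (0:ℝ) 1) = ∑' k : ℕ, volume (J k) := by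
  have hsub : ∀ k, J k ⊆ Ioo (1/((k:ℝ)+2)) (1/((k:ℝ)+1)) := by
    intro k; rw [← heq k]; exact inter_subset_right
  have hdisj : Pairwise (Function.onFun Disjoint J) := by
    intro k l hkl
    exact Disjoint.mono (hsub k) (hsub l) (branch_disjoint hkl)
  have hUn : volume (⋃ k, J k) = ∑' k : ℕ, volume (J k) := measure_iUnion hdisj hJm
  apply le_antisymm
  · have h2 : P ∩ Icc (0:ℝ) 1 ⊆ (⋃ k, J k) ∪ Ebad := by
      rintro x ⟨hxP, hxI⟩
      by_cases hE : x ∈ Ebad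
      · exact Or.inr hE
      · obtain ⟨k, hk⟩ := mem_branch_Ioo hxI hE
        have hxJ : x ∈ J k := by rw [← heq k]; exact ⟨hxP, hk⟩
        exact Or.inl (Set.mem_iUnion.2 ⟨k, hxJ⟩)
    calc volume (P ∩ Icc (0:ℝ) 1) ≤ volume ((⋃ k, J k) ∪ Ebad) := measure_mono h2
      _ ≤ volume (⋃ k, J k) + volume Ebad := measure_union_le _ _
      _ = ∑' k : ℕ, volume (J k) := by rw [Ebad_vol, add_zero, hUn]
  · rw [← hUn]
    apply measure_mono
    apply Set.iUnion_subset
    intro k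
    rw [← heq k]
    exact Set.inter_subset_inter_right _ (Ioo_subset_Icc01 k)

end Part1
namespace Part1
open MeasureTheory Set

set_option maxHeartbeats 1000000

/-! ### `Tc j 0` preserves Lebesgue measure on `[0,1]` -/

/-- The affine branch maps. -/
def gaff (j : Bool) (k : ℕ) (x : ℝ) : ℝ :=
  if j then (-(((k:ℝ)+2)*((k:ℝ)+1)))*x + ((k:ℝ)+2) else (((k:ℝ)+2)*((k:ℝ)+1))*x + (-((k:ℝ)+1))

lemma measurable_gaff (j : Bool) (k : ℕ) : Measurable (gaff j k) := by
  unfold gaff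
  cases j
  · simp only [Bool.false_eq_true, if_false]
    exact ((measurable_id.const_mul _).add_const _ : Measurable fun x : ℝ =>
      (((k:ℝ)+2)*((k:ℝ)+1))*x + (-((k:ℝ)+1)))
  · simp only [if_true]
    exact ((measurable_id.const_mul _).add_const _ : Measurable fun x : ℝ =>
      (-(((k:ℝ)+2)*((k:ℝ)+1)))*x + ((k:ℝ)+2))

lemma gaff_mem_Ioo (j : Bool) (k : ℕ) (x : ℝ) :
    gaff j k x ∈ Ioo (0:ℝ) 1 ↔ x ∈ Ioo (1/((k:ℝ)+2)) (1/((k:ℝ)+1)) := by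
  have h2 : (0:ℝ) < (k:ℝ)+2 := by positivity
  have h1 : (0:ℝ) < (k:ℝ)+1 := by positivity
  unfold gaff
  cases j <;> simp only [if_true, if_false, Set.mem_Ioo, Bool.false_eq_true] <;>
  · constructor
    · rintro ⟨u, v⟩
      constructor
      · rw [div_lt_iff₀ h2]; nlinarith
      · rw [lt_div_iff₀ h1]; nlinarith
    · rintro ⟨u, v⟩
      rw [div_lt_iff₀ h2] at u
      rw [lt_div_iff₀ h1] at v
      constructor <;> nlinarith

lemma Tc_eq_gaff_on_branch (j : Bool) {k : ℕ} {x : ℝ}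
    (hx : x ∈ Ioo (1/((k:ℝ)+2)) (1/((k:ℝ)+1))) : Tc j 0 x = gaff j k x := by
  rw [Tc_on_branch j hx.1 hx.2]
  have hTL : TL x = ((k:ℝ)+2)*((k:ℝ)+1)*x - ((k:ℝ)+1) := TL_on_branch (le_of_lt hx.1) hx.2
  cases j
  · simp only [Bool.false_eq_true, if_false]
    rw [hTL]; unfold gaff; simp; ring
  · simp only [if_true]
    unfold TA gaff
    rw [hTL]; simp; ring

lemma vol_inter_Ioo_Icc (B : Set ℝ) : volume (B ∩ Ioo (0:ℝ) 1) = volume (B ∩ Icc (0:ℝ) 1) := by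
  apply le_antisymm
  · exact measure_mono (Set.inter_subset_inter_right _ Set.Ioo_subset_Icc_self)
  · have hsub : B ∩ Icc (0:ℝ) 1 ⊆ (B ∩ Ioo (0:ℝ) 1) ∪ ({0, 1} : Set ℝ) := by
      rintro x ⟨hxB, hxI⟩
      rcases eq_or_lt_of_le hxI.1 with h | h
      · exact Or.inr (Or.inl h.symm)
      rcases eq_or_lt_of_le hxI.2 with h' | h'
      · exact Or.inr (Or.inr h')
      exact Or.inl ⟨hxB, h, h'⟩
    calc volume (B ∩ Icc (0:ℝ) 1) ≤ volume ((B ∩ Ioo (0:ℝ) 1) ∪ ({0,1} : Set ℝ)) :=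
        measure_mono hsub
      _ ≤ volume (B ∩ Ioo (0:ℝ) 1) + volume ({0,1} : Set ℝ) := measure_union_le _ _
      _ = volume (B ∩ Ioo (0:ℝ) 1) := by
        rw [((Set.countable_singleton (1:ℝ)).insert 0).measure_zero volume, add_zero]

lemma tsum_branch_vol : ∑' k : ℕ, ENNReal.ofReal (1/((((k:ℝ)+2))*((k:ℝ)+1))) = 1 := by
  have h := telescope_hasSum 0
  simp only [Nat.cast_zero, add_zero, zero_add] at h
  rw [← ENNReal.ofReal_tsum_of_nonneg (fun k => by positivity) h.summable, h.tsum_eq]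
  norm_num

lemma Tc_vol_preimage (j : Bool) (B : Set ℝ) (hB : MeasurableSet B) :
    volume ((Tc j 0) ⁻¹' B ∩ Icc (0:ℝ) 1) = volume (B ∩ Icc (0:ℝ) 1) := by
  have hJm : ∀ k : ℕ, MeasurableSet ((gaff j k) ⁻¹' (B ∩ Ioo (0:ℝ) 1)) :=
    fun k => (measurable_gaff j k) (hB.inter measurableSet_Ioo)
  have heq : ∀ k : ℕ, (Tc j 0) ⁻¹' B ∩ Ioo (1/((k:ℝ)+2)) (1/((k:ℝ)+1))
      = (gaff j k) ⁻¹' (B ∩ Ioo (0:ℝ) 1) := by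
    intro k
    ext x
    constructor
    · rintro ⟨hxB, hxI⟩
      refine ⟨?_, (gaff_mem_Ioo j k x).2 hxI⟩
      rw [← Tc_eq_gaff_on_branch j hxI]
      exact hxB
    · rintro ⟨hxB, hxI⟩
      have hxI' := (gaff_mem_Ioo j k x).1 hxI
      refine ⟨?_, hxI'⟩
      show Tc j 0 x ∈ B
      rw [Tc_eq_gaff_on_branch j hxI']
      exact hxB
  rw [vol_decomp _ _ hJm heq]
  have hvol : ∀ k : ℕ, volume ((gaff j k) ⁻¹' (B ∩ Ioo (0:ℝ) 1))
      = ENNReal.ofReal (1/((((k:ℝ)+2))*((k:ℝ)+1))) * volume (B ∩ Ioo (0:ℝ) 1) := by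
    intro k
    have hk : (((k:ℝ)+2)*((k:ℝ)+1)) ≠ 0 := by positivity
    have habs : |((((k:ℝ)+2))*((k:ℝ)+1))⁻¹| = 1/((((k:ℝ)+2))*((k:ℝ)+1)) := by
      rw [abs_of_pos (by positivity), one_div]
    cases j
    · show volume ((fun x => (((k:ℝ)+2)*((k:ℝ)+1))*x + (-((k:ℝ)+1))) ⁻¹' _) = _
      rw [vol_affine_preimage _ _ hk, habs]
    · show volume ((fun x => (-(((k:ℝ)+2)*((k:ℝ)+1)))*x + ((k:ℝ)+2)) ⁻¹' _) = _
      rw [vol_affine_preimage _ _ (by simpa using hk), inv_neg, abs_neg, habs]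
  calc ∑' k : ℕ, volume ((gaff j k) ⁻¹' (B ∩ Ioo (0:ℝ) 1))
      = ∑' k : ℕ, ENNReal.ofReal (1/((((k:ℝ)+2))*((k:ℝ)+1))) * volume (B ∩ Ioo (0:ℝ) 1) := by
        exact tsum_congr hvol
    _ = (∑' k : ℕ, ENNReal.ofReal (1/((((k:ℝ)+2))*((k:ℝ)+1)))) * volume (B ∩ Ioo (0:ℝ) 1) :=
        ENNReal.tsum_mul_right
    _ = volume (B ∩ Icc (0:ℝ) 1) := by rw [tsum_branch_vol, one_mul, vol_inter_Ioo_Icc]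

end Part1
namespace Part1
open MeasureTheory Set

set_option maxHeartbeats 1000000

/-! ### The distribution of `θ₁` -/

lemma le_floor_one_div {y : ℝ} (hy0 : 0 < y) (j : ℕ) :
    j ≤ ⌊1/y⌋₊ ↔ (j:ℝ)*y ≤ 1 := by
  rw [Nat.le_floor_iff (by positivity), le_div_iff₀ hy0]

lemma theta_one_formula (ω : ℕ → Bool) (x : ℝ) :
    theta ω x 1 = ((dig 0 ω x 0 : ℝ) - (sgn 0 ω x 0 : ℝ)) *
      |x - ((dig 0 ω x 0 : ℝ) - 1 + (sgn 0 ω x 0 : ℝ)) /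
        ((dig 0 ω x 0 : ℝ) * ((dig 0 ω x 0 : ℝ) - 1))| := by
  unfold theta conv
  norm_num [Finset.sum_range_succ, Finset.prod_range_one]

lemma dig_zero_on_branch (ω : ℕ → Bool) {x : ℝ} {k : ℕ}
    (h1 : 1/((k:ℝ)+2) ≤ x) (h2 : x < 1/((k:ℝ)+1)) : dig 0 ω x 0 = k + 2 := by
  have hxne1 : x ≠ 1 := ne_of_lt (lt_of_lt_of_le h2 (branch_le_one k))
  unfold dig
  rw [show Tom 0 ω 0 x = x from rfl, if_neg hxne1]
  exact ceilNat_on_branch h1 h2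

lemma theta_one_on_branch (ω : ℕ → Bool) {x : ℝ} {k : ℕ}
    (h1 : 1/((k:ℝ)+2) ≤ x) (h2 : x < 1/((k:ℝ)+1)) :
    theta ω x 1 = if ω 0 then 1 - ((k:ℝ)+1)*x else ((k:ℝ)+2)*x - 1 := by
  have hk1 : (0:ℝ) < (k:ℝ)+1 := by positivity
  have hk2 : (0:ℝ) < (k:ℝ)+2 := by positivity
  rw [theta_one_formula, dig_zero_on_branch ω h1 h2, sgn_zero_eq]
  have hcast : ((k+2:ℕ):ℝ) = (k:ℝ)+2 := by push_cast; ring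
  rw [hcast]
  cases hω : ω 0
  · simp only [Bool.false_eq_true, if_false, Nat.cast_zero]
    have hq : ((k:ℝ)+2 - 1 + 0) / (((k:ℝ)+2) * ((k:ℝ)+2 - 1)) = 1/((k:ℝ)+2) := by
      have hne : ((k:ℝ)+2) * ((k:ℝ)+2-1) ≠ 0 := by
        have h : (k:ℝ)+2-1 = (k:ℝ)+1 := by ring
        rw [h]; positivity
      rw [div_eq_div_iff hne (ne_of_gt hk2)]; ring
    rw [hq, abs_of_nonneg (by linarith [h1] : (0:ℝ) ≤ x - 1/((k:ℝ)+2))]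
    field_simp
    ring
  · simp only [if_true, Nat.cast_one]
    have hq : ((k:ℝ)+2 - 1 + 1) / (((k:ℝ)+2) * ((k:ℝ)+2 - 1)) = 1/((k:ℝ)+1) := by
      have hne : ((k:ℝ)+2) * ((k:ℝ)+2-1) ≠ 0 := by
        have h : (k:ℝ)+2-1 = (k:ℝ)+1 := by ring
        rw [h]; positivity
      rw [div_eq_div_iff hne (ne_of_gt hk1)]; ring
    rw [hq, abs_of_nonpos (by linarith [h2] : x - 1/((k:ℝ)+1) ≤ 0)]
    have : ((k:ℝ)+1) * (1/((k:ℝ)+1)) = 1 := by field_simp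
    nlinarith [this]

lemma Jset_false {ω : ℕ → Bool} (hω : ω 0 = false) (y : ℝ) (k : ℕ) :
    {x : ℝ | theta ω x 1 ≤ y} ∩ Ioo (1/((k:ℝ)+2)) (1/((k:ℝ)+1))
      = Ioo (1/((k:ℝ)+2)) (1/((k:ℝ)+1)) ∩ Iic ((1+y)/((k:ℝ)+2)) := by
  have hk2 : (0:ℝ) < (k:ℝ)+2 := by positivity
  ext x
  simp only [Set.mem_inter_iff, Set.mem_setOf_eq, Set.mem_Iic]
  rw [and_comm (b := x ∈ Ioo (1/((k:ℝ)+2)) (1/((k:ℝ)+1)))]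
  apply and_congr_right
  intro hx
  rw [theta_one_on_branch ω (le_of_lt hx.1) hx.2, hω]
  simp only [Bool.false_eq_true, if_false]
  rw [le_div_iff₀ hk2]
  constructor <;> intro h <;> nlinarith

lemma Jset_true {ω : ℕ → Bool} (hω : ω 0 = true) (y : ℝ) (k : ℕ) :
    {x : ℝ | theta ω x 1 ≤ y} ∩ Ioo (1/((k:ℝ)+2)) (1/((k:ℝ)+1))
      = Ioo (1/((k:ℝ)+2)) (1/((k:ℝ)+1)) ∩ Ici ((1-y)/((k:ℝ)+1)) := by
  have hk1 : (0:ℝ) < (k:ℝ)+1 := by positivity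
  ext x
  simp only [Set.mem_inter_iff, Set.mem_setOf_eq, Set.mem_Ici]
  rw [and_comm (b := x ∈ Ioo (1/((k:ℝ)+2)) (1/((k:ℝ)+1)))]
  apply and_congr_right
  intro hx
  rw [theta_one_on_branch ω (le_of_lt hx.1) hx.2, hω]
  simp only [if_true]
  rw [div_le_iff₀ hk1]
  constructor <;> intro h <;> nlinarith

/-- The branch volume for the Lüroth (`s = 0`) case. -/
lemma branch_vol_false {y : ℝ} (hy : y ∈ Set.Ioc (0:ℝ) 1) (k : ℕ) :
    volume (Ioo (1/((k:ℝ)+2)) (1/((k:ℝ)+1)) ∩ Iic ((1+y)/((k:ℝ)+2)))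
      = ENNReal.ofReal (if k < ⌊1/y⌋₊ then y/((k:ℝ)+2)
          else 1/(((k:ℝ)+2)*((k:ℝ)+1))) := by
  have hy0 := hy.1
  have hk1 : (0:ℝ) < (k:ℝ)+1 := by positivity
  have hk2 : (0:ℝ) < (k:ℝ)+2 := by positivity
  rw [vol_Ioo_inter_Iic ((div_le_div_iff_of_pos_right hk2).2 (by linarith)) (le_of_lt (branch_lt k))]
  congr 1
  have hsub : (1:ℝ)/((k:ℝ)+1) - 1/((k:ℝ)+2) = 1/(((k:ℝ)+2)*((k:ℝ)+1)) := by
    rw [div_sub_div _ _ (ne_of_gt hk1) (ne_of_gt hk2),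
      div_eq_div_iff (by positivity) (by positivity)]
    ring
  by_cases hk : k < ⌊1/y⌋₊
  · have hle : ((k:ℝ)+1)*y ≤ 1 := by
      have := (le_floor_one_div hy0 (k+1)).1 (by omega)
      push_cast at this; linarith
    have hmin : (1+y)/((k:ℝ)+2) ≤ 1/((k:ℝ)+1) := by
      rw [div_le_div_iff₀ hk2 hk1]; nlinarith
    rw [min_eq_right hmin, if_pos hk, div_sub_div_same]
    norm_num
  · have hgt : 1 < ((k:ℝ)+1)*y := by
      by_contra hcon
      push_neg at hcon
      exact hk (by
        have := (le_floor_one_div hy0 (k+1)).2 (by push_cast; linarith)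
        omega)
    have hmin : (1:ℝ)/((k:ℝ)+1) ≤ (1+y)/((k:ℝ)+2) := by
      rw [div_le_div_iff₀ hk1 hk2]; nlinarith
    rw [min_eq_left hmin, if_neg hk, hsub]

/-- The branch volume for the alternating (`s = 1`) case. -/
lemma branch_vol_true {y : ℝ} (hy : y ∈ Set.Ioc (0:ℝ) 1) (k : ℕ) :
    volume (Ioo (1/((k:ℝ)+2)) (1/((k:ℝ)+1)) ∩ Ici ((1-y)/((k:ℝ)+1)))
      = ENNReal.ofReal (if k + 2 ≤ ⌊1/y⌋₊ then y/((k:ℝ)+1)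
          else 1/(((k:ℝ)+2)*((k:ℝ)+1))) := by
  have hy0 := hy.1
  have hk1 : (0:ℝ) < (k:ℝ)+1 := by positivity
  have hk2 : (0:ℝ) < (k:ℝ)+2 := by positivity
  rw [vol_Ioo_inter_Ici ((div_le_div_iff_of_pos_right hk1).2 (by linarith)) (le_of_lt (branch_lt k))]
  congr 1
  have hsub : (1:ℝ)/((k:ℝ)+1) - 1/((k:ℝ)+2) = 1/(((k:ℝ)+2)*((k:ℝ)+1)) := by
    rw [div_sub_div _ _ (ne_of_gt hk1) (ne_of_gt hk2),
      div_eq_div_iff (by positivity) (by positivity)]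
    ring
  by_cases hk : k + 2 ≤ ⌊1/y⌋₊
  · have hle : ((k:ℝ)+2)*y ≤ 1 := by
      have := (le_floor_one_div hy0 (k+2)).1 hk
      push_cast at this; linarith
    have hmax : (1:ℝ)/((k:ℝ)+2) ≤ (1-y)/((k:ℝ)+1) := by
      rw [div_le_div_iff₀ hk2 hk1]; nlinarith
    rw [max_eq_right hmax, if_pos hk, div_sub_div_same]
    norm_num
  · have hgt : 1 < ((k:ℝ)+2)*y := by
      by_contra hcon
      push_neg at hcon
      exact hk (by
        have := (le_floor_one_div hy0 (k+2)).2 (by push_cast; linarith)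
        omega)
    have hmax : (1-y)/((k:ℝ)+1) ≤ 1/((k:ℝ)+2) := by
      rw [div_le_div_iff₀ hk1 hk2]; nlinarith
    rw [max_eq_left hmax, if_neg hk, hsub]

lemma tsum_vol_false {y : ℝ} (hy : y ∈ Set.Ioc (0:ℝ) 1) :
    ∑' k : ℕ, ENNReal.ofReal (if k < ⌊1/y⌋₊ then y/((k:ℝ)+2) else 1/(((k:ℝ)+2)*((k:ℝ)+1)))
      = ENNReal.ofReal (FL y) := by
  have hy0 := hy.1
  set N := ⌊1/y⌋₊ with hN
  set g : ℕ → ℝ := fun k => if k < N then y/((k:ℝ)+2) else 1/(((k:ℝ)+2)*((k:ℝ)+1)) with hg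
  have hnn : ∀ k, 0 ≤ g k := by
    intro k
    rw [hg]
    simp only
    by_cases h : k < N
    · rw [if_pos h]; positivity
    · rw [if_neg h]; positivity
  have htail : ∀ k : ℕ, g (k + N) = 1/(((k:ℝ)+(N:ℝ)+2)*((k:ℝ)+(N:ℝ)+1)) := by
    intro k
    rw [hg]
    simp only
    rw [if_neg (by omega)]
    push_cast
    ring_nf
  have hsum : Summable g := by
    rw [← summable_nat_add_iff N]
    apply Summable.congr (telescope_hasSum N).summable
    intro k
    rw [htail k]
  rw [← ENNReal.ofReal_tsum_of_nonneg hnn hsum]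
  congr 1
  rw [← Summable.sum_add_tsum_nat_add N hsum]
  have htailsum : ∑' k : ℕ, g (k + N) = 1/((N:ℝ)+1) := by
    rw [tsum_congr htail]
    exact (telescope_hasSum N).tsum_eq
  rw [htailsum]
  unfold FL
  rw [← hN]
  congr 1
  rw [← Finset.Ico_add_one_right_eq_Icc, Finset.sum_Ico_eq_sum_range]
  have h2 : N + 1 + 1 - 2 = N := by omega
  rw [h2]
  apply Finset.sum_congr rfl
  intro i hi
  rw [hg]
  simp only
  rw [if_pos (Finset.mem_range.1 hi)]
  congr 1
  push_cast
  ring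

lemma tsum_vol_true {y : ℝ} (hy : y ∈ Set.Ioc (0:ℝ) 1) :
    ∑' k : ℕ, ENNReal.ofReal (if k + 2 ≤ ⌊1/y⌋₊ then y/((k:ℝ)+1) else 1/(((k:ℝ)+2)*((k:ℝ)+1)))
      = ENNReal.ofReal (FA y) := by
  have hy0 := hy.1
  set N := ⌊1/y⌋₊ with hN
  have hN1 : 1 ≤ N := by
    apply Nat.le_floor
    rw [Nat.cast_one, le_div_iff₀ hy0, one_mul]
    exact hy.2
  set M := N - 1 with hM
  set g : ℕ → ℝ := fun k => if k + 2 ≤ N then y/((k:ℝ)+1) else 1/(((k:ℝ)+2)*((k:ℝ)+1)) with hg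
  have hnn : ∀ k, 0 ≤ g k := by
    intro k
    rw [hg]
    simp only
    by_cases h : k + 2 ≤ N
    · rw [if_pos h]; positivity
    · rw [if_neg h]; positivity
  have htail : ∀ k : ℕ, g (k + M) = 1/(((k:ℝ)+(M:ℝ)+2)*((k:ℝ)+(M:ℝ)+1)) := by
    intro k
    rw [hg]
    simp only
    rw [if_neg (by omega)]
    push_cast
    ring_nf
  have hsum : Summable g := by
    rw [← summable_nat_add_iff M]
    apply Summable.congr (telescope_hasSum M).summable
    intro k
    rw [htail k]
  rw [← ENNReal.ofReal_tsum_of_nonneg hnn hsum]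
  congr 1
  rw [← Summable.sum_add_tsum_nat_add M hsum]
  have htailsum : ∑' k : ℕ, g (k + M) = 1/((N:ℝ)) := by
    rw [tsum_congr htail, (telescope_hasSum M).tsum_eq]
    congr 1
    rw [hM]
    push_cast [Nat.cast_sub hN1]
    ring
  rw [htailsum]
  unfold FA
  rw [← hN]
  congr 1
  rw [← Finset.Ico_add_one_right_eq_Icc, Finset.sum_Ico_eq_sum_range]
  have h2 : N + 1 - 2 = M := by omega
  rw [h2]
  apply Finset.sum_congr rfl
  intro i hi
  have hiM : i < M := Finset.mem_range.1 hi
  rw [hg]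
  simp only
  rw [if_pos (by omega)]
  congr 1
  push_cast
  ring

lemma theta_one_vol {y : ℝ} (hy : y ∈ Set.Ioc (0:ℝ) 1) (ω : ℕ → Bool) :
    volume ({x : ℝ | theta ω x 1 ≤ y} ∩ Icc (0:ℝ) 1)
      = ENNReal.ofReal (if ω 0 then FA y else FL y) := by
  cases hω : ω 0
  · rw [vol_decomp _ (fun k : ℕ => Ioo (1/((k:ℝ)+2)) (1/((k:ℝ)+1)) ∩ Iic ((1+y)/((k:ℝ)+2)))
      (fun k => measurableSet_Ioo.inter measurableSet_Iic) (fun k => Jset_false hω y k)]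
    rw [tsum_congr (fun k => branch_vol_false hy k)]
    simp only [Bool.false_eq_true, if_false]
    exact tsum_vol_false hy
  · rw [vol_decomp _ (fun k : ℕ => Ioo (1/((k:ℝ)+2)) (1/((k:ℝ)+1)) ∩ Ici ((1-y)/((k:ℝ)+1)))
      (fun k => measurableSet_Ioo.inter measurableSet_Ici) (fun k => Jset_true hω y k)]
    rw [tsum_congr (fun k => branch_vol_true hy k)]
    simp only [if_true]
    exact tsum_vol_true hy



end Part1
namespace Part1
open MeasureTheory Filter Set

set_option maxHeartbeats 1000000

/-! ### Bernoulli measures -/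

def shft (ω : ℕ → Bool) : ℕ → Bool := fun n => ω (n+1)

lemma measurable_shft : Measurable shft :=
  measurable_pi_lambda _ fun n => measurable_pi_apply (n+1)

lemma cylinder_measurable (n : ℕ) (f : Fin n → Bool) :
    MeasurableSet {ω : ℕ → Bool | ∀ i : Fin n, ω i = f i} := by
  have : {ω : ℕ → Bool | ∀ i : Fin n, ω i = f i}
      = ⋂ i : Fin n, {ω : ℕ → Bool | ω i = f i} := by
    ext ω; simp [Set.mem_iInter]
  rw [this]
  apply MeasurableSet.iInter
  intro i
  have h2 : {ω : ℕ → Bool | ω i = f i} = (fun ω : ℕ → Bool => ω (i:ℕ)) ⁻¹' {f i} := rfl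
  rw [h2]
  exact (measurable_pi_apply (i:ℕ)) (measurableSet_singleton (f i))

lemma bernoulli_coord0 {p : ℝ} {m : Measure (ℕ → Bool)} (hm : IsBernoulli p m) (b : Bool) :
    m {ω : ℕ → Bool | ω 0 = b} = ENNReal.ofReal (if b then 1-p else p) := by
  have h := hm.2 1 (fun _ => b)
  have hset : {ω : ℕ → Bool | ∀ i : Fin 1, ω i = b} = {ω : ℕ → Bool | ω 0 = b} := by
    ext ω
    simp only [Set.mem_setOf_eq, Fin.forall_fin_one]
    rfl
  rw [hset] at h
  rw [h, Fin.prod_univ_one]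

lemma bernoulli_shift {p : ℝ} {m : Measure (ℕ → Bool)} (hp0 : 0 ≤ p) (hp1 : p ≤ 1)
    (hm : IsBernoulli p m) : IsBernoulli p (m.map shft) := by
  haveI := hm.1
  refine ⟨Measure.isProbabilityMeasure_map measurable_shft.aemeasurable, ?_⟩
  intro n f
  rw [Measure.map_apply measurable_shft (cylinder_measurable n f)]
  have hpre : shft ⁻¹' {ω : ℕ → Bool | ∀ i : Fin n, ω i = f i}
      = {ω : ℕ → Bool | ∀ i : Fin (n+1), ω i = (Fin.cons false f : Fin (n+1) → Bool) i}
        ∪ {ω : ℕ → Bool | ∀ i : Fin (n+1), ω i = (Fin.cons true f : Fin (n+1) → Bool) i} := by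
    ext ω
    simp only [Set.mem_preimage, Set.mem_setOf_eq, Set.mem_union]
    constructor
    · intro h
      cases hb : ω 0
      · left
        intro i
        refine Fin.cases ?_ (fun j => ?_) i
        · simpa using hb
        · rw [Fin.cons_succ]
          have := h j
          simpa [shft] using this
      · right
        intro i
        refine Fin.cases ?_ (fun j => ?_) i
        · simpa using hb
        · rw [Fin.cons_succ]
          have := h j
          simpa [shft] using this
    · rintro (h | h) i <;>
      · have := h i.succ
        rw [Fin.cons_succ] at this
        simpa [shft] using this
  rw [hpre]
  have hdisj : Disjoint {ω : ℕ → Bool | ∀ i : Fin (n+1), ω i = (Fin.cons false f : Fin (n+1) → Bool) i}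
      {ω : ℕ → Bool | ∀ i : Fin (n+1), ω i = (Fin.cons true f : Fin (n+1) → Bool) i} := by
    rw [Set.disjoint_left]
    intro ω h1 h2
    have hf := h1 0
    have ht := h2 0
    rw [Fin.cons_zero] at hf ht
    rw [hf] at ht
    exact Bool.false_ne_true ht
  rw [measure_union hdisj (cylinder_measurable (n+1) _), hm.2 (n+1), hm.2 (n+1)]
  rw [Fin.prod_univ_succ, Fin.prod_univ_succ]
  simp only [Fin.cons_zero, Fin.cons_succ, if_true, Bool.false_eq_true, if_false]
  rw [← add_mul, ← ENNReal.ofReal_add hp0 (by linarith)]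
  norm_num

/-! ### Nonnegativity of the distribution functions -/

lemma FL_nonneg {y : ℝ} (hy : y ∈ Set.Ioc (0:ℝ) 1) : 0 ≤ FL y := by
  unfold FL
  apply add_nonneg
  · apply Finset.sum_nonneg
    intro k _
    exact div_nonneg (le_of_lt hy.1) (Nat.cast_nonneg k)
  · positivity

lemma FA_nonneg {y : ℝ} (hy : y ∈ Set.Ioc (0:ℝ) 1) : 0 ≤ FA y := by
  unfold FA
  apply add_nonneg
  · apply Finset.sum_nonneg
    intro k hk
    have h2 : 2 ≤ k := (Finset.mem_Icc.1 hk).1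
    have : (1:ℝ) ≤ (k:ℝ) - 1 := by
      have : (2:ℝ) ≤ (k:ℝ) := by exact_mod_cast h2
      linarith
    exact div_nonneg (le_of_lt hy.1) (by linarith)
  · positivity

/-! ### The base case `n = 1` -/

instance : IsFiniteMeasure (volume.restrict (Icc (0:ℝ) 1)) := by
  constructor
  rw [Measure.restrict_apply_univ]
  simp [Real.volume_Icc]

lemma key_base {p : ℝ} (hp0 : 0 < p) (hp1 : p < 1) (m : Measure (ℕ → Bool))
    (hm : IsBernoulli p m) {y : ℝ} (hy : y ∈ Set.Ioc (0:ℝ) 1) :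
    (m.prod (volume.restrict (Set.Icc (0:ℝ) 1))) {q : (ℕ → Bool) × ℝ | theta q.1 q.2 1 ≤ y}
      = ENNReal.ofReal (p * FL y + (1 - p) * FA y) := by
  haveI := hm.1
  have hS : MeasurableSet {q : (ℕ → Bool) × ℝ | theta q.1 q.2 1 ≤ y} :=
    measurableSet_le (measurable_theta 1) measurable_const
  rw [Measure.prod_apply hS]
  have hsec : ∀ ω : ℕ → Bool,
      (volume.restrict (Set.Icc (0:ℝ) 1)) (Prod.mk ω ⁻¹' {q : (ℕ → Bool) × ℝ | theta q.1 q.2 1 ≤ y})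
        = ENNReal.ofReal (if ω 0 then FA y else FL y) := by
    intro ω
    rw [Measure.restrict_apply' measurableSet_Icc]
    exact theta_one_vol hy ω
  rw [lintegral_congr hsec]
  have hfun : (fun ω : ℕ → Bool => ENNReal.ofReal (if ω 0 then FA y else FL y))
      = fun ω => Set.indicator {ω : ℕ → Bool | ω 0 = true}
          (fun _ => ENNReal.ofReal (FA y)) ω
        + Set.indicator {ω : ℕ → Bool | ω 0 = false}
          (fun _ => ENNReal.ofReal (FL y)) ω := by
    funext ω
    cases hb : ω 0 <;> simp [Set.indicator, hb]
  rw [hfun]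
  have hmt : MeasurableSet {ω : ℕ → Bool | ω 0 = true} := by
    have h2 : {ω : ℕ → Bool | ω 0 = true} = (fun ω : ℕ → Bool => ω 0) ⁻¹' {true} := rfl
    rw [h2]
    exact (measurable_pi_apply 0) (measurableSet_singleton true)
  have hmf : MeasurableSet {ω : ℕ → Bool | ω 0 = false} := by
    have h2 : {ω : ℕ → Bool | ω 0 = false} = (fun ω : ℕ → Bool => ω 0) ⁻¹' {false} := rfl
    rw [h2]
    exact (measurable_pi_apply 0) (measurableSet_singleton false)
  rw [lintegral_add_left (measurable_const.indicator hmt)]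
  rw [lintegral_indicator hmt, lintegral_indicator hmf]
  rw [setLIntegral_const, setLIntegral_const]
  rw [bernoulli_coord0 hm true, bernoulli_coord0 hm false]
  simp only [if_true, Bool.false_eq_true, if_false]
  rw [← ENNReal.ofReal_mul (FA_nonneg hy), ← ENNReal.ofReal_mul (FL_nonneg hy),
    ← ENNReal.ofReal_add (by nlinarith [FA_nonneg hy]) (by nlinarith [FL_nonneg hy])]
  congr 1
  ring

end Part1
namespace Part1
open MeasureTheory Filter Set

set_option maxHeartbeats 1000000

/-! ### The shift recursion for `theta` -/

lemma Tom_shift (ω : ℕ → Bool) (x : ℝ) : ∀ n : ℕ,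
    Tom 0 ω (n+1) x = Tom 0 (shft ω) n (Tc (ω 0) 0 x)
  | 0 => rfl
  | (n+1) => by
    show Tc (ω (n+1)) 0 (Tom 0 ω (n+1) x) = Tc (shft ω n) 0 (Tom 0 (shft ω) n (Tc (ω 0) 0 x))
    rw [Tom_shift ω x n]
    rfl

lemma dig_shift (ω : ℕ → Bool) (x : ℝ) (n : ℕ) :
    dig 0 ω x (n+1) = dig 0 (shft ω) (Tc (ω 0) 0 x) n := by
  unfold dig
  rw [Tom_shift]

lemma sgn_shift (ω : ℕ → Bool) (x x' : ℝ) (n : ℕ) :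
    sgn 0 ω x (n+1) = sgn 0 (shft ω) x' n := by
  rw [sgn_zero_eq, sgn_zero_eq]
  rfl

lemma step_identity (ω : ℕ → Bool) {x : ℝ} {k : ℕ}
    (hx : x ∈ Ioo (1/((k:ℝ)+2)) (1/((k:ℝ)+1))) :
    x - ((dig 0 ω x 0 : ℝ) - 1 + (sgn 0 ω x 0 : ℝ))
        / ((dig 0 ω x 0 : ℝ) * ((dig 0 ω x 0 : ℝ) - 1))
      = (-1:ℝ)^(sgn 0 ω x 0) * (Tc (ω 0) 0 x)
        / ((dig 0 ω x 0 : ℝ) * ((dig 0 ω x 0 : ℝ) - 1)) := by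
  have hk1 : (0:ℝ) < (k:ℝ)+1 := by positivity
  have hk2 : (0:ℝ) < (k:ℝ)+2 := by positivity
  rw [dig_zero_on_branch ω (le_of_lt hx.1) hx.2, sgn_zero_eq, Tc_eq_gaff_on_branch _ hx]
  unfold gaff
  have hcast : ((k+2:ℕ):ℝ) = (k:ℝ)+2 := by push_cast; ring
  rw [hcast]
  have hne : ((k:ℝ)+2) * ((k:ℝ)+2-1) ≠ 0 := by
    have h : (k:ℝ)+2-1 = (k:ℝ)+1 := by ring
    rw [h]; positivity
  cases hb : ω 0
  · simp only [Bool.false_eq_true, if_false, Nat.cast_zero, pow_zero]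
    rw [eq_div_iff hne, sub_mul, div_mul_cancel₀ _ hne]
    ring
  · simp only [if_true, pow_one, Nat.cast_one]
    rw [eq_div_iff hne, sub_mul, div_mul_cancel₀ _ hne]
    ring

lemma conv_shift (ω : ℕ → Bool) (x : ℝ) (n : ℕ) :
    conv 0 ω x (n+1)
      = ((dig 0 ω x 0 : ℝ) - 1 + (sgn 0 ω x 0 : ℝ))
          / ((dig 0 ω x 0 : ℝ) * ((dig 0 ω x 0 : ℝ) - 1))
        + ((-1:ℝ)^(sgn 0 ω x 0) / ((dig 0 ω x 0 : ℝ) * ((dig 0 ω x 0 : ℝ) - 1)))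
          * conv 0 (shft ω) (Tc (ω 0) 0 x) n := by
  set x' := Tc (ω 0) 0 x with hx'
  unfold conv
  rw [Finset.sum_range_succ']
  have hT0 : (-1:ℝ) ^ (∑ i ∈ Finset.range 0, sgn 0 ω x i) *
      ((dig 0 ω x 0 : ℝ) - 1 + (sgn 0 ω x 0 : ℝ)) /
      (∏ i ∈ Finset.range (0+1), ((dig 0 ω x i : ℝ) * ((dig 0 ω x i : ℝ) - 1)))
      = ((dig 0 ω x 0 : ℝ) - 1 + (sgn 0 ω x 0 : ℝ))
          / ((dig 0 ω x 0 : ℝ) * ((dig 0 ω x 0 : ℝ) - 1)) := by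
    rw [Finset.sum_range_zero, Finset.prod_range_one, pow_zero, one_mul]
  rw [hT0]
  rw [Finset.mul_sum]
  rw [add_comm]
  congr 1
  apply Finset.sum_congr rfl
  intro j _
  have hsum : ∑ i ∈ Finset.range (j+1), sgn 0 ω x i
      = (∑ i ∈ Finset.range j, sgn 0 (shft ω) x' i) + sgn 0 ω x 0 := by
    rw [Finset.sum_range_succ']
    congr 1
    apply Finset.sum_congr rfl
    intro i _
    exact sgn_shift ω x x' i
  have hprod : ∏ i ∈ Finset.range (j+1+1), ((dig 0 ω x i : ℝ) * ((dig 0 ω x i : ℝ) - 1))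
      = (∏ i ∈ Finset.range (j+1), ((dig 0 (shft ω) x' i : ℝ) * ((dig 0 (shft ω) x' i : ℝ) - 1)))
        * ((dig 0 ω x 0 : ℝ) * ((dig 0 ω x 0 : ℝ) - 1)) := by
    rw [Finset.prod_range_succ']
    congr 1
    apply Finset.prod_congr rfl
    intro i _
    rw [dig_shift ω x i]
  rw [hsum, hprod, dig_shift ω x j, sgn_shift ω x x' j, pow_add]
  simp only [div_eq_mul_inv, mul_inv]
  ring

lemma theta_shift (ω : ℕ → Bool) {x : ℝ} {k : ℕ}
    (hx : x ∈ Ioo (1/((k:ℝ)+2)) (1/((k:ℝ)+1))) (n : ℕ) (hn : 1 ≤ n) :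
    theta ω x (n+1) = theta (shft ω) (Tc (ω 0) 0 x) n := by
  obtain ⟨n', rfl⟩ : ∃ n', n = n' + 1 := ⟨n-1, by omega⟩
  set x' := Tc (ω 0) 0 x with hx'
  set D := (dig 0 ω x 0 : ℝ) * ((dig 0 ω x 0 : ℝ) - 1) with hD
  have hP0 : (0:ℝ) < D := by
    rw [hD, dig_zero_on_branch ω (le_of_lt hx.1) hx.2]
    have hcast : ((k+2:ℕ):ℝ) = (k:ℝ)+2 := by push_cast; ring
    rw [hcast]
    nlinarith [Nat.cast_nonneg (α := ℝ) k]
  set C' := conv 0 (shft ω) x' (n'+1) with hC'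
  have hdiff : x - conv 0 ω x (n'+1+1) = ((-1:ℝ)^(sgn 0 ω x 0)/D) * (x' - C') := by
    rw [conv_shift ω x (n'+1)]
    have hstep := step_identity ω hx
    calc x - (((dig 0 ω x 0 : ℝ) - 1 + (sgn 0 ω x 0 : ℝ)) / D
          + ((-1:ℝ)^(sgn 0 ω x 0) / D) * C')
        = (x - ((dig 0 ω x 0 : ℝ) - 1 + (sgn 0 ω x 0 : ℝ)) / D)
          - ((-1:ℝ)^(sgn 0 ω x 0) / D) * C' := by ring
      _ = (-1:ℝ)^(sgn 0 ω x 0) * x' / D - ((-1:ℝ)^(sgn 0 ω x 0) / D) * C' := by rw [hstep]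
      _ = ((-1:ℝ)^(sgn 0 ω x 0)/D) * (x' - C') := by ring
  have habs : |x - conv 0 ω x (n'+1+1)| = (1/D) * |x' - C'| := by
    rw [hdiff, abs_mul, abs_div, abs_pow, abs_neg, abs_one, one_pow, abs_of_pos hP0]
  have hprod : ∏ i ∈ Finset.range (n'+1), ((dig 0 ω x i : ℝ) * ((dig 0 ω x i : ℝ) - 1))
      = (∏ i ∈ Finset.range n', ((dig 0 (shft ω) x' i : ℝ) * ((dig 0 (shft ω) x' i : ℝ) - 1)))
        * D := by
    rw [Finset.prod_range_succ']
    congr 1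
    apply Finset.prod_congr rfl
    intro i _
    rw [dig_shift ω x i]
  unfold theta
  simp only [Nat.add_sub_cancel]
  rw [dig_shift ω x n', sgn_shift ω x x' n', habs, hprod]
  have key : ∀ a b c P : ℝ, P ≠ 0 → a * (b*P) * ((1/P)*c) = a * b * c := by
    intro a b c P hP
    field_simp
  exact key _ _ _ _ (ne_of_gt hP0)

end Part1
namespace Part1
open MeasureTheory Filter Set

set_option maxHeartbeats 1000000

lemma measurable_L0 : Measurable L0 := by
  unfold L0
  apply Measurable.prod
  · exact measurable_pi_lambda _ fun n => (measurable_pi_apply (n+1)).comp measurable_fst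
  · have h : (fun q : (ℕ → Bool) × ℝ => Tc (q.1 0) 0 q.2)
        = fun q => if q.1 0 = true then Tc true 0 q.2 else Tc false 0 q.2 := by
      funext q
      cases hq : q.1 0 <;> simp [hq]
    show Measurable fun q : (ℕ → Bool) × ℝ => Tc (q.1 0) 0 q.2
    rw [h]
    exact Measurable.ite (measurableSet_coord 0) ((measurable_Tc true).comp measurable_snd)
      ((measurable_Tc false).comp measurable_snd)

lemma key_step (p : ℝ) (hp0 : 0 < p) (hp1 : p < 1) {y : ℝ} (hy : y ∈ Set.Ioc (0:ℝ) 1) :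
    ∀ n : ℕ, ∀ m : Measure (ℕ → Bool), IsBernoulli p m →
    (m.prod (volume.restrict (Set.Icc (0:ℝ) 1))) {q : (ℕ → Bool) × ℝ | theta q.1 q.2 (n+1) ≤ y}
      = ENNReal.ofReal (p * FL y + (1 - p) * FA y) := by
  intro n
  induction n with
  | zero => exact fun m hm => key_base hp0 hp1 m hm hy
  | succ n ih =>
    intro m hm
    haveI := hm.1
    set lam := volume.restrict (Set.Icc (0:ℝ) 1) with hlam
    set S' := {q : (ℕ → Bool) × ℝ | theta q.1 q.2 (n+1) ≤ y} with hS'def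
    have hS' : MeasurableSet S' :=
      measurableSet_le (measurable_theta (n+1)) measurable_const
    -- a.e. identification with the preimage under L0
    have hbad : (m.prod lam) (Set.univ ×ˢ (Ebad ∪ (Set.Icc (0:ℝ) 1)ᶜ)) = 0 := by
      rw [Measure.prod_prod]
      have hz : lam (Ebad ∪ (Set.Icc (0:ℝ) 1)ᶜ) = 0 := by
        rw [hlam, Measure.restrict_apply' measurableSet_Icc]
        have hsub : (Ebad ∪ (Set.Icc (0:ℝ) 1)ᶜ) ∩ Set.Icc (0:ℝ) 1 ⊆ Ebad := by
          rintro x ⟨(hx | hx), hxI⟩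
          · exact hx
          · exact absurd hxI hx
        exact measure_mono_null hsub Ebad_vol
      rw [hz, mul_zero]
    have hae : {q : (ℕ → Bool) × ℝ | theta q.1 q.2 (n+1+1) ≤ y} =ᵐ[m.prod lam] L0 ⁻¹' S' := by
      rw [Filter.eventuallyEq_set]
      have h0 : ∀ᵐ q ∂(m.prod lam), q ∉ (Set.univ ×ˢ (Ebad ∪ (Set.Icc (0:ℝ) 1)ᶜ)) :=
        measure_eq_zero_iff_ae_notMem.mp hbad
      filter_upwards [h0] with q hq
      have hq2 : q.2 ∈ Set.Icc (0:ℝ) 1 ∧ q.2 ∉ Ebad := by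
        by_cases hI : q.2 ∈ Set.Icc (0:ℝ) 1
        · refine ⟨hI, fun hE => hq ⟨Set.mem_univ _, Or.inl hE⟩⟩
        · exact absurd ⟨Set.mem_univ _, Or.inr hI⟩ hq
      obtain ⟨k, hk⟩ := mem_branch_Ioo hq2.1 hq2.2
      have hth := theta_shift q.1 hk (n+1) (by omega)
      show theta q.1 q.2 (n+1+1) ≤ y ↔ q ∈ L0 ⁻¹' S'
      rw [hth]
      rfl
    rw [measure_congr hae]
    -- invariance of the measure under L0
    rw [Measure.prod_apply (measurable_L0 hS')]
    have hsec : ∀ ω : ℕ → Bool, lam (Prod.mk ω ⁻¹' (L0 ⁻¹' S')) = lam (Prod.mk (shft ω) ⁻¹' S') := by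
      intro ω
      have hpre : Prod.mk ω ⁻¹' (L0 ⁻¹' S') = (Tc (ω 0) 0) ⁻¹' (Prod.mk (shft ω) ⁻¹' S') := rfl
      rw [hpre, hlam, Measure.restrict_apply' measurableSet_Icc,
        Measure.restrict_apply' measurableSet_Icc]
      exact Tc_vol_preimage (ω 0) _ (measurable_prodMk_left hS')
    rw [lintegral_congr hsec]
    have hmap : ∫⁻ ω, lam (Prod.mk (shft ω) ⁻¹' S') ∂m
        = ∫⁻ ω, lam (Prod.mk ω ⁻¹' S') ∂(m.map shft) := by
      rw [lintegral_map (measurable_measure_prodMk_left hS') measurable_shft]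
    rw [hmap]
    haveI := (bernoulli_shift (le_of_lt hp0) (le_of_lt hp1) hm).1
    rw [← Measure.prod_apply hS']
    exact ih (m.map shft) (bernoulli_shift (le_of_lt hp0) (le_of_lt hp1) hm)

end Part1
/-- the distribution function of the approximation coefficient `θ_n`
under `m_p × λ` is `p·F_L + (1−p)·F_A`. -/
theorem theta_distribution (p : ℝ) (hp0 : 0 < p) (hp1 : p < 1)
    (m : Measure (ℕ → Bool)) (hm : IsBernoulli p m)
    (n : ℕ) (hn : 1 ≤ n) (y : ℝ) (hy : y ∈ Set.Ioc (0:ℝ) 1) :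
    (m.prod (volume.restrict (Set.Icc (0:ℝ) 1)))
        {q : (ℕ → Bool) × ℝ | theta q.1 q.2 n ≤ y}
      = ENNReal.ofReal (p * FL y + (1 - p) * FA y) := by
  obtain ⟨n', rfl⟩ : ∃ n', n = n' + 1 := ⟨n-1, by omega⟩
  exact Part1.key_step p hp0 hp1 hy n' m hm
end
end

section
/- Let 0 < c ≤ 2/5. Then every irrational x ∈ [c,1] has uncountably many different c-Lüroth expansions, i.e. the set of sequences {((s_n(ω,x), d_n(ω,x)))_{n≥1} : ω ∈ {0,1}^ℕ} is uncountable. -/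
open MeasureTheory Filter Set
open scoped Classical ENNReal

noncomputable section

namespace CLuroth

variable {c : ℝ}

lemma zp_lt_z_pred (hc0 : 0 < c) (hc1 : c < 1) {n : ℕ} (hn : 2 ≤ n) :
    zp c n < 1/((n:ℝ)-1) := by
  have hN : (2:ℝ) ≤ (n:ℝ) := by exact_mod_cast hn
  have h1 : (0:ℝ) < (n:ℝ) := by linarith
  have h2 : (0:ℝ) < (n:ℝ) - 1 := by linarith
  have key : 1/((n:ℝ)-1) - zp c n = (1 - c)/((n:ℝ)*((n:ℝ)-1)) := by
    rw [zp]; field_simp; ring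
  nlinarith [div_pos (by linarith : (0:ℝ) < 1 - c) (mul_pos h1 h2)]

lemma z_lt_zp (hc0 : 0 < c) {n : ℕ} (hn : 2 ≤ n) : 1/(n:ℝ) < zp c n := by
  have hN : (2:ℝ) ≤ (n:ℝ) := by exact_mod_cast hn
  have h1 : (0:ℝ) < (n:ℝ) := by linarith
  have h2 : (0:ℝ) < (n:ℝ) - 1 := by linarith
  have key : zp c n - 1/(n:ℝ) = c/((n:ℝ)*((n:ℝ)-1)) := by rw [zp]; field_simp; ring
  nlinarith [div_pos hc0 (mul_pos h1 h2)]

lemma zm_lt_z (hc0 : 0 < c) {m : ℕ} (hm : 1 ≤ m) : zm c m < 1/(m:ℝ) := by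
  have hN : (1:ℝ) ≤ (m:ℝ) := by exact_mod_cast hm
  have h1 : (0:ℝ) < (m:ℝ) := by linarith
  have h2 : (0:ℝ) < (m:ℝ) + 1 := by linarith
  have key : 1/(m:ℝ) - zm c m = c/((m:ℝ)*((m:ℝ)+1)) := by rw [zm]; field_simp; ring
  nlinarith [div_pos hc0 (mul_pos h1 h2)]

lemma z_succ_lt_zm (hc1 : c < 1) {m : ℕ} (hm : 1 ≤ m) : 1/((m:ℝ)+1) < zm c m := by
  have hN : (1:ℝ) ≤ (m:ℝ) := by exact_mod_cast hm
  have h1 : (0:ℝ) < (m:ℝ) := by linarith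
  have h2 : (0:ℝ) < (m:ℝ) + 1 := by linarith
  have key : zm c m - 1/((m:ℝ)+1) = (1 - c)/((m:ℝ)*((m:ℝ)+1)) := by
    rw [zm]; field_simp; ring
  nlinarith [div_pos (by linarith : (0:ℝ) < 1 - c) (mul_pos h1 h2)]

lemma zm_pred_eq {n : ℕ} (hn : 2 ≤ n) :
    zm c (n-1) = 1/((n:ℝ)-1) - c * (1/((n:ℝ)-1)) * (1/(n:ℝ)) := by
  rw [zm, Nat.cast_sub (by omega : 1 ≤ n), Nat.cast_one, sub_add_cancel]

lemma zp_le_zm_pred (hc0 : 0 < c) (hc : c ≤ 2/5) {n : ℕ} (hn : 2 ≤ n) :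
    zp c n ≤ zm c (n-1) := by
  have hN : (2:ℝ) ≤ (n:ℝ) := by exact_mod_cast hn
  have h1 : (0:ℝ) < (n:ℝ) := by linarith
  have h2 : (0:ℝ) < (n:ℝ) - 1 := by linarith
  have key : zm c (n-1) - zp c n = (1 - 2*c)/((n:ℝ)*((n:ℝ)-1)) := by
    rw [zm_pred_eq hn, zp]; field_simp; ring
  nlinarith [div_nonneg (by linarith : (0:ℝ) ≤ 1 - 2*c) (le_of_lt (mul_pos h1 h2))]

lemma zm_pred_lt_z_pred (hc0 : 0 < c) {n : ℕ} (hn : 2 ≤ n) :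
    zm c (n-1) < 1/((n:ℝ)-1) := by
  have h := zm_lt_z hc0 (m := n-1) (by omega)
  rwa [Nat.cast_sub (by omega : 1 ≤ n), Nat.cast_one] at h

lemma zm_anti (hc0 : 0 < c) (hc1 : c < 1) {a b : ℕ} (ha : 1 ≤ a) (hab : a ≤ b) :
    zm c b ≤ zm c a := by
  rcases eq_or_lt_of_le hab with h | h
  · rw [h]
  · have hb1 : (0:ℝ) < (b:ℝ) := by exact_mod_cast Nat.pos_of_ne_zero (by omega)
    have hba : (a:ℝ) + 1 ≤ (b:ℝ) := by exact_mod_cast h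
    have h1 : zm c b < 1/(b:ℝ) := zm_lt_z hc0 (by omega)
    have h2 : 1/((a:ℝ)+1) < zm c a := z_succ_lt_zm hc1 ha
    have h3 : 1/(b:ℝ) ≤ 1/((a:ℝ)+1) := by
      apply one_div_le_one_div_of_le (by positivity) hba
    linarith

lemma zm_one_eq : zm c 1 = 1 - c/2 := by rw [zm]; norm_num; ring

lemma zm_lt_one (hc0 : 0 < c) {m : ℕ} (hm : 1 ≤ m) : zm c m < 1 := by
  have h1 : zm c m < 1/(m:ℝ) := zm_lt_z hc0 hm
  have hN : (1:ℝ) ≤ (m:ℝ) := by exact_mod_cast hm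
  have : 1/(m:ℝ) ≤ 1 := by
    rw [div_le_one (by linarith)]; linarith
  linarith

end CLuroth
namespace CLuroth

variable {c : ℝ}

/-- In the branch `(1/d, 1/(d-1))` the `T_0` switching condition reduces to `y < zp c d`. -/
lemma cond0_iff (hc0 : 0 < c) (hc1 : c < 1) {d : ℕ} (hd : 2 ≤ d) {y : ℝ}
    (h1 : 1/(d:ℝ) < y) (h2 : y < 1/((d:ℝ)-1)) :
    (∃ n : ℕ, 2 ≤ n ∧ 1/(n:ℝ) ≤ y ∧ y < zp c n) ↔ y < zp c d := by
  constructor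
  · rintro ⟨n, hn, hny, hy⟩
    rcases lt_trichotomy n d with h | h | h
    · exfalso
      have hnd : (n:ℝ) ≤ (d:ℝ) - 1 := by
        have : (n:ℝ) + 1 ≤ (d:ℝ) := by exact_mod_cast h
        linarith
      have hn0 : (0:ℝ) < (n:ℝ) := by exact_mod_cast Nat.pos_of_ne_zero (by omega)
      have : 1/((d:ℝ)-1) ≤ 1/(n:ℝ) := one_div_le_one_div_of_le hn0 hnd
      linarith
    · rwa [h] at hy
    · exfalso
      have hdn : (d:ℝ) ≤ (n:ℝ) - 1 := by
        have : (d:ℝ) + 1 ≤ (n:ℝ) := by exact_mod_cast h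
        linarith
      have hd0 : (0:ℝ) < (d:ℝ) := by exact_mod_cast Nat.pos_of_ne_zero (by omega)
      have hle : 1/((n:ℝ)-1) ≤ 1/(d:ℝ) := one_div_le_one_div_of_le hd0 hdn
      have := zp_lt_z_pred hc0 hc1 (n := n) (by omega)
      linarith
  · intro h; exact ⟨d, hd, le_of_lt h1, h⟩

/-- In the branch `(1/d, 1/(d-1))` the `T_1` switching condition reduces to `y ≤ zm c (d-1)`. -/
lemma cond1_iff (hc0 : 0 < c) (hc1 : c < 1) {d : ℕ} (hd : 2 ≤ d) {y : ℝ}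
    (h1 : 1/(d:ℝ) < y) (h2 : y < 1/((d:ℝ)-1)) :
    (∃ n : ℕ, 2 ≤ n ∧ 1/(n:ℝ) ≤ y ∧ y ≤ zm c (n-1)) ↔ y ≤ zm c (d-1) := by
  constructor
  · rintro ⟨n, hn, hny, hy⟩
    rcases lt_trichotomy n d with h | h | h
    · exfalso
      have hnd : (n:ℝ) ≤ (d:ℝ) - 1 := by
        have : (n:ℝ) + 1 ≤ (d:ℝ) := by exact_mod_cast h
        linarith
      have hn0 : (0:ℝ) < (n:ℝ) := by exact_mod_cast Nat.pos_of_ne_zero (by omega)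
      have : 1/((d:ℝ)-1) ≤ 1/(n:ℝ) := one_div_le_one_div_of_le hn0 hnd
      linarith
    · rwa [h] at hy
    · exfalso
      have hdn : (d:ℝ) ≤ (n:ℝ) - 1 := by
        have : (d:ℝ) + 1 ≤ (n:ℝ) := by exact_mod_cast h
        linarith
      have hd0 : (0:ℝ) < (d:ℝ) := by exact_mod_cast Nat.pos_of_ne_zero (by omega)
      have hle : 1/((n:ℝ)-1) ≤ 1/(d:ℝ) := one_div_le_one_div_of_le hd0 hdn
      have := zm_pred_lt_z_pred hc0 (n := n) (by omega)
      linarith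
  · intro h; exact ⟨d, hd, le_of_lt h1, h⟩

lemma Tc_false_eq_TA (hc0 : 0 < c) (hc1 : c < 1) {d : ℕ} (hd : 2 ≤ d) {y : ℝ}
    (h1 : 1/(d:ℝ) < y) (h2 : y < 1/((d:ℝ)-1)) (hy1 : y ≠ 1) (h : y < zp c d) :
    Tc false c y = TA y := by
  rw [Tc, if_neg (fun hx => absurd hx.1 (ne_of_gt hc0)), if_neg hy1, if_pos]
  exact Or.inl ⟨rfl, d, hd, le_of_lt h1, h⟩

lemma Tc_false_eq_TL (hc0 : 0 < c) (hc1 : c < 1) {d : ℕ} (hd : 2 ≤ d) {y : ℝ}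
    (h1 : 1/(d:ℝ) < y) (h2 : y < 1/((d:ℝ)-1)) (hy1 : y ≠ 1) (h : zp c d ≤ y) :
    Tc false c y = TL y := by
  rw [Tc, if_neg (fun hx => absurd hx.1 (ne_of_gt hc0)), if_neg hy1, if_neg]
  rintro (⟨-, hex⟩ | ⟨habs, -⟩)
  · exact absurd ((cond0_iff hc0 hc1 hd h1 h2).mp hex) (not_lt.mpr h)
  · exact Bool.noConfusion habs

lemma Tc_true_eq_TA (hc0 : 0 < c) (hc1 : c < 1) {d : ℕ} (hd : 2 ≤ d) {y : ℝ}
    (h1 : 1/(d:ℝ) < y) (h2 : y < 1/((d:ℝ)-1)) (hy1 : y ≠ 1) (h : y ≤ zm c (d-1)) :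
    Tc true c y = TA y := by
  rw [Tc, if_neg (fun hx => absurd hx.1 (ne_of_gt hc0)), if_neg hy1, if_pos]
  exact Or.inr ⟨rfl, d, hd, le_of_lt h1, h⟩

lemma Tc_true_eq_TL (hc0 : 0 < c) (hc1 : c < 1) {d : ℕ} (hd : 2 ≤ d) {y : ℝ}
    (h1 : 1/(d:ℝ) < y) (h2 : y < 1/((d:ℝ)-1)) (hy1 : y ≠ 1) (h : zm c (d-1) < y) :
    Tc true c y = TL y := by
  rw [Tc, if_neg (fun hx => absurd hx.1 (ne_of_gt hc0)), if_neg hy1, if_neg]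
  rintro (⟨habs, -⟩ | ⟨-, hex⟩)
  · exact Bool.noConfusion habs
  · exact absurd ((cond1_iff hc0 hc1 hd h1 h2).mp hex) (not_le.mpr h)

lemma TL_eq {d : ℕ} (hd : 2 ≤ d) {y : ℝ} (hy : Irrational y)
    (h1 : 1/(d:ℝ) < y) (h2 : y < 1/((d:ℝ)-1)) :
    TL y = (d:ℝ)*((d:ℝ)-1)*y - ((d:ℝ)-1) := by
  have hD : (2:ℝ) ≤ (d:ℝ) := by exact_mod_cast hd
  have hy0 : (0:ℝ) < y := lt_trans (by positivity) h1
  have hyne0 : y ≠ 0 := ne_of_gt hy0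
  have hyne1 : y ≠ 1 := fun h => hy (h ▸ ⟨1, by norm_num⟩)
  rw [TL, if_neg hyne0, if_neg hyne1]
  have hceil : ⌈1/y⌉ = (d:ℤ) := by
    rw [Int.ceil_eq_iff]
    constructor
    · push_cast
      rw [lt_div_iff₀ hy0]
      calc ((d:ℝ)-1) * y < ((d:ℝ)-1) * (1/((d:ℝ)-1)) := by
            apply mul_lt_mul_of_pos_left h2 (by linarith)
        _ = 1 := by
            rw [mul_one_div, div_self (ne_of_gt (by linarith : (0:ℝ) < (d:ℝ)-1))]
    · push_cast
      rw [div_le_iff₀ hy0]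
      calc (1:ℝ) = (d:ℝ) * (1/(d:ℝ)) := by field_simp
        _ ≤ (d:ℝ) * y := by apply mul_le_mul_of_nonneg_left (le_of_lt h1) (by linarith)
  rw [hceil]; push_cast; ring

lemma TA_eq {d : ℕ} (hd : 2 ≤ d) {y : ℝ} (hy : Irrational y)
    (h1 : 1/(d:ℝ) < y) (h2 : y < 1/((d:ℝ)-1)) :
    TA y = 1 - ((d:ℝ)*((d:ℝ)-1)*y - ((d:ℝ)-1)) := by
  rw [TA, TL_eq hd hy h1 h2]

lemma irrational_affine {d : ℕ} (hd : 2 ≤ d) {y : ℝ} (hy : Irrational y) :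
    Irrational ((d:ℝ)*((d:ℝ)-1)*y - ((d:ℝ)-1)) := by
  have hne : d*(d-1) ≠ 0 := by
    have : 1 ≤ d - 1 := by omega
    positivity
  have h1 : Irrational (((d*(d-1):ℕ):ℝ) * y) := hy.natCast_mul hne
  have h2 := h1.sub_natCast (d-1)
  have hcast : ((d*(d-1):ℕ):ℝ) * y - ((d-1:ℕ):ℝ) = (d:ℝ)*((d:ℝ)-1)*y - ((d:ℝ)-1) := by
    push_cast [Nat.cast_sub (by omega : 1 ≤ d)]; ring
  rwa [hcast] at h2

lemma irrational_one_sub {y : ℝ} (hy : Irrational y) : Irrational (1 - y) := by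
  have := hy.ratCast_sub (q := 1); simpa using this

end CLuroth
namespace CLuroth

variable {c : ℝ}

lemma S_branch (hc0 : 0 < c) (hc : c ≤ 2/5) {y : ℝ} (hyS : y ∈ SwitchS c) :
    ∃ d : ℕ, 2 ≤ d ∧ 1/(d:ℝ) < y ∧ y < 1/((d:ℝ)-1) ∧ zp c d ≤ y ∧ y ≤ zm c (d-1) := by
  obtain ⟨-, n, hn, h1, h2⟩ := hyS
  exact ⟨n, hn, lt_of_lt_of_le (z_lt_zp hc0 hn) h1,
    lt_of_le_of_lt h2 (zm_pred_lt_z_pred hc0 hn), h1, h2⟩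

lemma S_le_zm_one (hc0 : 0 < c) (hc : c ≤ 2/5) {y : ℝ} (hyS : y ∈ SwitchS c) :
    y ≤ zm c 1 := by
  obtain ⟨-, n, hn, -, h2⟩ := hyS
  exact le_trans h2 (zm_anti hc0 (by linarith) (by omega) (by omega))

lemma S_ne_one (hc0 : 0 < c) (hc : c ≤ 2/5) {y : ℝ} (hyS : y ∈ SwitchS c) : y ≠ 1 := by
  have h1 := S_le_zm_one hc0 hc hyS
  have h2 : zm c 1 < 1 := zm_lt_one hc0 le_rfl
  linarith

lemma S_not_gap (hc0 : 0 < c) (hc : c ≤ 2/5) {y : ℝ} (hyS : y ∈ SwitchS c) :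
    ¬ ∃ d : ℕ, 1 ≤ d ∧ zm c d < y ∧ y < 1/(d:ℝ) := by
  obtain ⟨-, n, hn, hzp, hzm⟩ := hyS
  rintro ⟨d, hd, hg1, hg2⟩
  rcases le_or_gt n d with h | h
  · -- n ≤ d : y < 1/d ≤ 1/n < zp c n ≤ y
    have hn0 : (0:ℝ) < (n:ℝ) := by exact_mod_cast Nat.pos_of_ne_zero (by omega)
    have : 1/(d:ℝ) ≤ 1/(n:ℝ) := one_div_le_one_div_of_le hn0 (by exact_mod_cast h)
    have := z_lt_zp hc0 hn
    linarith
  · -- d ≤ n - 1 : y ≤ zm c (n-1) ≤ zm c d < y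
    have : zm c (n-1) ≤ zm c d := zm_anti hc0 (by linarith) hd (by omega)
    linarith

/-- Step from a point of the switch region: both maps land in `[c, 1-c]`. -/
lemma S_step (hc0 : 0 < c) (hc : c ≤ 2/5) {y : ℝ} (hy : Irrational y)
    (hyS : y ∈ SwitchS c) (j : Bool) :
    Irrational (Tc j c y) ∧ c ≤ Tc j c y ∧ Tc j c y ≤ 1 - c := by
  obtain ⟨d, hd, h1, h2, hzp, hzm⟩ := S_branch hc0 hc hyS
  have hc1 : c < 1 := by linarith
  have hD : (2:ℝ) ≤ (d:ℝ) := by exact_mod_cast hd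
  have hD0 : (0:ℝ) < (d:ℝ) := by linarith
  have hD1 : (0:ℝ) < (d:ℝ) - 1 := by linarith
  have hyne1 : y ≠ 1 := S_ne_one hc0 hc hyS
  have hTL : TL y = (d:ℝ)*((d:ℝ)-1)*y - ((d:ℝ)-1) := TL_eq hd hy h1 h2
  have hzpid : (d:ℝ)*((d:ℝ)-1) * zp c d = ((d:ℝ)-1) + c := by
    rw [zp]; field_simp <;> ring
  have hzmid : (d:ℝ)*((d:ℝ)-1) * zm c (d-1) = (d:ℝ) - c := by
    rw [zm_pred_eq hd]; field_simp <;> ring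
  have hprod : (0:ℝ) < (d:ℝ)*((d:ℝ)-1) := mul_pos hD0 hD1
  have hbound1 : c ≤ TL y := by
    have := mul_le_mul_of_nonneg_left hzp (le_of_lt hprod)
    rw [hzpid] at this; rw [hTL]; linarith
  have hbound2 : TL y ≤ 1 - c := by
    have := mul_le_mul_of_nonneg_left hzm (le_of_lt hprod)
    rw [hzmid] at this; rw [hTL]; linarith
  have hirr : Irrational (TL y) := by rw [hTL]; exact irrational_affine hd hy
  cases j with
  | false =>
    rw [Tc_false_eq_TL hc0 hc1 hd h1 h2 hyne1 hzp]
    exact ⟨hirr, hbound1, hbound2⟩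
  | true =>
    rw [Tc_true_eq_TA hc0 hc1 hd h1 h2 hyne1 hzm, TA]
    exact ⟨irrational_one_sub hirr, by linarith, by linarith⟩

/-- Step from a point of `[c,1]` off the switch region: the two maps agree and land
in `(1-c, 1)`. -/
lemma gap_step (hc0 : 0 < c) (hc : c ≤ 2/5) {y : ℝ} (hy : Irrational y)
    (hyI : y ∈ Set.Icc c 1) (hyS : y ∉ SwitchS c) :
    Tc true c y = Tc false c y ∧ Irrational (Tc false c y) ∧
      1 - c < Tc false c y ∧ Tc false c y < 1 := by
  have hc1 : c < 1 := by linarith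
  have hyne1 : y ≠ 1 := fun h => hy (h ▸ ⟨1, by norm_num⟩)
  have hylt1 : y < 1 := lt_of_le_of_ne hyI.2 hyne1
  have hyc : c ≤ y := hyI.1
  have hy0 : (0:ℝ) < y := lt_of_lt_of_le hc0 hyc
  rcases lt_or_ge (zm c 1) y with hA | hB
  · -- y ∈ (zm c 1, 1), digit 2, both maps are TL, TL y = 2y - 1
    have h1 : 1/((2:ℕ):ℝ) < y := by
      rw [zm_one_eq] at hA; push_cast; linarith
    have h2 : y < 1/(((2:ℕ):ℝ)-1) := by push_cast; norm_num; exact hylt1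
    have hzp2 : zp c 2 ≤ y := le_trans (le_trans (zp_le_zm_pred hc0 hc le_rfl)
      (le_of_eq (by norm_num))) (le_of_lt hA)
    have hzm2 : zm c (2-1) < y := by norm_num; exact hA
    have hTL : TL y = ((2:ℕ):ℝ)*(((2:ℕ):ℝ)-1)*y - (((2:ℕ):ℝ)-1) := TL_eq le_rfl hy h1 h2
    have hTL' : TL y = 2*y - 1 := by rw [hTL]; push_cast; ring
    refine ⟨?_, ?_, ?_, ?_⟩
    · rw [Tc_true_eq_TL hc0 hc1 le_rfl h1 h2 hyne1 hzm2,
        Tc_false_eq_TL hc0 hc1 le_rfl h1 h2 hyne1 hzp2]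
    · rw [Tc_false_eq_TL hc0 hc1 le_rfl h1 h2 hyne1 hzp2, hTL]
      exact irrational_affine le_rfl hy
    · rw [Tc_false_eq_TL hc0 hc1 le_rfl h1 h2 hyne1 hzp2, hTL']
      rw [zm_one_eq] at hA; linarith
    · rw [Tc_false_eq_TL hc0 hc1 le_rfl h1 h2 hyne1 hzp2, hTL']; linarith
  · -- y ≤ zm c 1; locate the branch d = n+1 with n = ⌊1/y⌋₊
    have hBlt : y < zm c 1 := by
      rcases lt_or_eq_of_le hB with h | h
      · exact h
      · exfalso; apply hyS
        refine ⟨⟨hyc, hyI.2⟩, 2, le_rfl, ?_, ?_⟩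
        · rw [h]; exact le_trans (zp_le_zm_pred hc0 hc le_rfl) (le_of_eq (by norm_num))
        · rw [h]
    set n : ℕ := ⌊1/y⌋₊ with hn_def
    have hyinv1 : (1:ℝ) < 1/y := by
      rw [lt_div_iff₀ hy0]
      have : zm c 1 < 1 := zm_lt_one hc0 le_rfl
      linarith
    have hn1 : 1 ≤ n := by
      rw [hn_def]; exact Nat.le_floor (by exact_mod_cast le_of_lt hyinv1)
    have hfl := Nat.floor_le (le_of_lt (lt_trans one_pos hyinv1))
    have hfl2 := Nat.lt_floor_add_one (1/y)
    have h1 : 1/((n:ℝ)+1) < y := by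
      rw [div_lt_iff₀ (by positivity), mul_comm, ← div_lt_iff₀ hy0]
      exact hfl2
    have h2' : y ≤ 1/(n:ℝ) := by
      rw [le_div_iff₀ (by exact_mod_cast Nat.pos_of_ne_zero (by omega)), mul_comm,
        ← le_div_iff₀ hy0]
      exact hfl
    have h2 : y < 1/(n:ℝ) := by
      rcases lt_or_eq_of_le h2' with h | h
      · exact h
      · exact absurd (h ▸ ⟨(1:ℚ)/(n:ℚ), by push_cast; ring⟩) hy
    -- branch d = n+1
    have hd : 2 ≤ n + 1 := by omega
    have hcast1 : 1/(((n+1:ℕ)):ℝ) = 1/((n:ℝ)+1) := by push_cast; ring_nf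
    have hcast2 : 1/((((n+1:ℕ)):ℝ)-1) = 1/(n:ℝ) := by push_cast; ring_nf
    have hb1 : 1/(((n+1:ℕ)):ℝ) < y := by rw [hcast1]; exact h1
    have hb2 : y < 1/((((n+1:ℕ)):ℝ)-1) := by rw [hcast2]; exact h2
    have hN : (1:ℝ) ≤ (n:ℝ) := by exact_mod_cast hn1
    have hDid : ((n+1:ℕ):ℝ) = (n:ℝ)+1 := by push_cast; ring
    have hTL : TL y = ((n:ℝ)+1)*(n:ℝ)*y - (n:ℝ) := by
      have := TL_eq hd hy hb1 hb2
      rw [this, hDid]; ring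
    have hzmid : ((n:ℝ)+1)*(n:ℝ) * zm c n = ((n:ℝ)+1) - c := by
      rw [zm]; field_simp <;> ring
    have hzpid : ((n:ℝ)+1)*(n:ℝ) * zp c (n+1) = (n:ℝ) + c := by
      rw [zp, hDid]; field_simp [ne_of_gt (by linarith : (0:ℝ) < (n:ℝ))] <;> ring
    have hprod : (0:ℝ) < ((n:ℝ)+1)*(n:ℝ) := by positivity
    have hpred : (n+1) - 1 = n := by omega
    rcases lt_or_ge y (zp c (n+1)) with hsub | hsub
    · -- both maps are TA
      have hzm' : y ≤ zm c ((n+1)-1) := by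
        rw [hpred]; exact le_trans (le_of_lt hsub) (by
          have := zp_le_zm_pred hc0 hc hd; rwa [hpred] at this)
      have hTA : TA y = 1 - TL y := rfl
      have hTLlt : TL y < c := by
        have := mul_lt_mul_of_pos_left hsub hprod
        rw [hzpid] at this; rw [hTL]; linarith
      have hTLpos : 0 < TL y := by
        have := mul_lt_mul_of_pos_left h1 hprod
        have hid : ((n:ℝ)+1)*(n:ℝ) * (1/((n:ℝ)+1)) = (n:ℝ) := by field_simp
        rw [hid] at this; rw [hTL]; linarith
      refine ⟨?_, ?_, ?_, ?_⟩
      · rw [Tc_true_eq_TA hc0 hc1 hd hb1 hb2 hyne1 hzm',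
          Tc_false_eq_TA hc0 hc1 hd hb1 hb2 hyne1 hsub]
      · rw [Tc_false_eq_TA hc0 hc1 hd hb1 hb2 hyne1 hsub, hTA]
        have hirr : Irrational (TL y) := by
          rw [TL_eq hd hy hb1 hb2]; exact irrational_affine hd hy
        exact irrational_one_sub hirr
      · rw [Tc_false_eq_TA hc0 hc1 hd hb1 hb2 hyne1 hsub, hTA]; linarith
      · rw [Tc_false_eq_TA hc0 hc1 hd hb1 hb2 hyne1 hsub, hTA]; linarith
    · -- then y > zm c n (else y ∈ S), and both maps are TL
      have hzm' : zm c n < y := by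
        by_contra hle
        push_neg at hle
        exact hyS ⟨⟨hyc, hyI.2⟩, n+1, hd, hsub, by rwa [hpred]⟩
      have hzm'' : zm c ((n+1)-1) < y := by rwa [hpred]
      have hTLlt1 : TL y < 1 := by
        have := mul_lt_mul_of_pos_left h2 hprod
        have hid : ((n:ℝ)+1)*(n:ℝ) * (1/(n:ℝ)) = (n:ℝ)+1 := by
          field_simp
        rw [hid] at this; rw [hTL]; linarith
      have hTLgt : 1 - c < TL y := by
        have := mul_lt_mul_of_pos_left hzm' hprod
        rw [hzmid] at this; rw [hTL]; linarith
      refine ⟨?_, ?_, ?_, ?_⟩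
      · rw [Tc_true_eq_TL hc0 hc1 hd hb1 hb2 hyne1 hzm'',
          Tc_false_eq_TL hc0 hc1 hd hb1 hb2 hyne1 hsub]
      · rw [Tc_false_eq_TL hc0 hc1 hd hb1 hb2 hyne1 hsub]
        rw [show TL y = ((n+1:ℕ):ℝ)*(((n+1:ℕ):ℝ)-1)*y - (((n+1:ℕ):ℝ)-1) from TL_eq hd hy hb1 hb2]
        exact irrational_affine hd hy
      · rw [Tc_false_eq_TL hc0 hc1 hd hb1 hb2 hyne1 hsub]; exact hTLgt
      · rw [Tc_false_eq_TL hc0 hc1 hd hb1 hb2 hyne1 hsub]; exact hTLlt1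

/-- Any `Tc`-step preserves irrationality and membership in `[c,1]`. -/
lemma Tc_good (hc0 : 0 < c) (hc : c ≤ 2/5) {y : ℝ} (hy : Irrational y)
    (hyI : y ∈ Set.Icc c 1) (j : Bool) :
    Irrational (Tc j c y) ∧ Tc j c y ∈ Set.Icc c 1 := by
  by_cases hS : y ∈ SwitchS c
  · obtain ⟨h1, h2, h3⟩ := S_step hc0 hc hy hS j
    exact ⟨h1, h2, by linarith⟩
  · obtain ⟨heq, h1, h2, h3⟩ := gap_step hc0 hc hy hyI hS
    cases j with
    | false => exact ⟨h1, by constructor <;> linarith⟩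
    | true => rw [heq]; exact ⟨h1, by constructor <;> linarith⟩

end CLuroth
namespace CLuroth

variable {c : ℝ}

lemma exists_pow_bound (hc0 : 0 < c) {r : ℝ} (hr : 0 < r) : ∃ M : ℕ, c ≤ 2^M * r := by
  obtain ⟨M, hM⟩ := pow_unbounded_of_one_lt (c / r) one_lt_two
  refine ⟨M, ?_⟩
  rw [div_lt_iff₀ hr] at hM
  linarith

lemma irr_ne_ratval {y : ℝ} (hy : Irrational y) (q : ℚ) : y ≠ (q:ℝ) :=
  fun h => hy (h ▸ ⟨q, rfl⟩)

/-- Hitting the switch region from the lower return interval `(1-c, zm c 1]`. -/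
lemma hitB (hc0 : 0 < c) (hc : c ≤ 2/5) :
    ∀ M : ℕ, ∀ y : ℝ, Irrational y → 1 - c < y → y ≤ zm c 1 →
      c ≤ 2^M * |y - 2/3| → ∃ k, (Tc false c)^[k] y ∈ SwitchS c := by
  have hc1 : c < 1 := by linarith
  intro M
  induction M with
  | zero =>
    intro y hy h1 h2 hb
    refine ⟨0, ?_⟩
    simp only [Function.iterate_zero, id_eq]
    have hzp2 : zp c 2 ≤ y := by
      by_contra hlt
      push_neg at hlt
      have e1 : zp c 2 = 1/2 + c/2 := by rw [zp]; norm_num; ring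
      rw [e1] at hlt
      have habs : |y - 2/3| < c := by
        rw [abs_lt]; constructor <;> linarith
      simp only [pow_zero, one_mul] at hb
      linarith
    refine ⟨⟨by linarith, by
      have := zm_lt_one hc0 (le_refl 1); linarith⟩, 2, le_rfl, hzp2, by
      simpa using h2⟩
  | succ M ih =>
    intro y hy h1 h2 hb
    by_cases hzp : zp c 2 ≤ y
    · refine ⟨0, ?_⟩
      simp only [Function.iterate_zero, id_eq]
      refine ⟨⟨by linarith, by have := zm_lt_one hc0 (le_refl 1); linarith⟩,
        2, le_rfl, hzp, by simpa using h2⟩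
    · push_neg at hzp
      have e1 : zp c 2 = 1/2 + c/2 := by rw [zp]; norm_num; ring
      have ezm : zm c 1 = 1 - c/2 := zm_one_eq
      have hb1 : 1/((2:ℕ):ℝ) < y := by push_cast; linarith
      have hb2 : y < 1/(((2:ℕ):ℝ)-1) := by
        push_cast; norm_num
        rw [ezm] at h2; linarith
      have hyne1 : y ≠ 1 := fun h => hy (h ▸ ⟨1, by norm_num⟩)
      have hTc : Tc false c y = TA y := Tc_false_eq_TA hc0 hc1 le_rfl hb1 hb2 hyne1 hzp
      have hTA : TA y = 2 - 2*y := by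
        rw [TA_eq le_rfl hy hb1 hb2]; push_cast; ring
      set y' := 2 - 2*y with hy'_def
      have hy'irr : Irrational y' := by
        rw [hy'_def]
        have h := (hy.natCast_mul (show (2:ℕ) ≠ 0 by norm_num)).ratCast_sub (q := 2)
        have : (2:ℝ) - ((2:ℕ):ℝ) * y = 2 - 2*y := by push_cast; ring
        rwa [show ((2:ℚ):ℝ) - ((2:ℕ):ℝ)*y = (2:ℝ) - ((2:ℕ):ℝ)*y by push_cast; ring, this] at h
      rw [e1] at hzp
      have hy'1 : 1 - c < y' := by rw [hy'_def]; linarith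
      have hy'2 : y' ≤ zm c 1 := by
        rw [hy'_def, ezm]; linarith
      have habs : |y' - 2/3| = 2 * |y - 2/3| := by
        rw [hy'_def, show 2 - 2*y - 2/3 = (-2) * (y - 2/3) by ring, abs_mul]
        norm_num
      have hb' : c ≤ 2^M * |y' - 2/3| := by
        rw [habs, ← mul_assoc]
        calc c ≤ 2^(M+1) * |y - 2/3| := hb
          _ = 2^M * 2 * |y - 2/3| := by rw [pow_succ]
      obtain ⟨k, hk⟩ := ih y' hy'irr hy'1 hy'2 hb'
      refine ⟨k+1, ?_⟩
      rw [Function.iterate_succ_apply, hTc, hTA]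
      exact hk

/-- Hitting the switch region from the top interval `(zm c 1, 1)`. -/
lemma hitA (hc0 : 0 < c) (hc : c ≤ 2/5) :
    ∀ M : ℕ, ∀ y : ℝ, Irrational y → zm c 1 < y → y < 1 →
      c ≤ 2^M * (1 - y) → ∃ k, (Tc false c)^[k] y ∈ SwitchS c := by
  have hc1 : c < 1 := by linarith
  intro M
  induction M with
  | zero =>
    intro y hy h1 h2 hb
    exfalso
    rw [zm_one_eq] at h1
    simp only [pow_zero, one_mul] at hb
    linarith
  | succ M ih =>
    intro y hy h1 h2 hb
    have ezm : zm c 1 = 1 - c/2 := zm_one_eq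
    have e1 : zp c 2 = 1/2 + c/2 := by rw [zp]; norm_num; ring
    have hb1 : 1/((2:ℕ):ℝ) < y := by push_cast; rw [ezm] at h1; linarith
    have hb2 : y < 1/(((2:ℕ):ℝ)-1) := by push_cast; norm_num; exact h2
    have hyne1 : y ≠ 1 := fun h => hy (h ▸ ⟨1, by norm_num⟩)
    have hzp : zp c 2 ≤ y := by rw [e1]; rw [ezm] at h1; linarith
    have hTc : Tc false c y = TL y := Tc_false_eq_TL hc0 hc1 le_rfl hb1 hb2 hyne1 hzp
    have hTL : TL y = 2*y - 1 := by
      rw [TL_eq le_rfl hy hb1 hb2]; push_cast; ring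
    set y' := 2*y - 1 with hy'_def
    have hy'irr : Irrational y' := by
      have h := (hy.natCast_mul (show (2:ℕ) ≠ 0 by norm_num)).sub_natCast 1
      have : ((2:ℕ):ℝ) * y - ((1:ℕ):ℝ) = 2*y - 1 := by push_cast; ring
      rwa [this] at h
    have hy'lt1 : y' < 1 := by rw [hy'_def]; linarith
    have hy'gt : 1 - c < y' := by
      rw [ezm] at h1; rw [hy'_def]; linarith
    have hsub : 1 - y' = 2*(1 - y) := by rw [hy'_def]; ring
    rcases le_or_gt y' (zm c 1) with hcase | hcase
    · -- drop into the lower interval, use hitB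
      have hpos' : (0:ℝ) < |y' - 2/3| := by
        rw [abs_pos, sub_ne_zero]
        have := irr_ne_ratval hy'irr (2/3)
        intro hcontra; apply this; rw [hcontra]; norm_num
      obtain ⟨M2, hM2⟩ := exists_pow_bound hc0 hpos'
      obtain ⟨k, hk⟩ := hitB hc0 hc M2 y' hy'irr hy'gt hcase hM2
      refine ⟨k+1, ?_⟩
      rw [Function.iterate_succ_apply, hTc, hTL]
      exact hk
    · obtain ⟨k, hk⟩ := ih y' hy'irr hcase hy'lt1 (by
        rw [hsub, ← mul_assoc]
        calc c ≤ 2^(M+1) * (1 - y) := hb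
          _ = 2^M * 2 * (1 - y) := by rw [pow_succ])
      refine ⟨k+1, ?_⟩
      rw [Function.iterate_succ_apply, hTc, hTL]
      exact hk

/-- Every irrational point of `[c,1]` reaches the switch region under `Tc false`. -/
lemma hit (hc0 : 0 < c) (hc : c ≤ 2/5) {y : ℝ} (hy : Irrational y)
    (hyI : y ∈ Set.Icc c 1) : ∃ k, (Tc false c)^[k] y ∈ SwitchS c := by
  by_cases hS : y ∈ SwitchS c
  · exact ⟨0, by simpa using hS⟩
  · obtain ⟨-, h1, h2, h3⟩ := gap_step hc0 hc hy hyI hS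
    set y' := Tc false c y with hy'_def
    have step : ∀ k, (Tc false c)^[k] y' ∈ SwitchS c → ∃ k', (Tc false c)^[k'] y ∈ SwitchS c :=
      fun k hk => ⟨k+1, by rwa [Function.iterate_succ_apply]⟩
    rcases le_or_gt y' (zm c 1) with hcase | hcase
    · have hpos' : (0:ℝ) < |y' - 2/3| := by
        rw [abs_pos, sub_ne_zero]
        have := irr_ne_ratval h1 (2/3)
        intro hcontra; apply this; rw [hcontra]; norm_num
      obtain ⟨M2, hM2⟩ := exists_pow_bound hc0 hpos'
      obtain ⟨k, hk⟩ := hitB hc0 hc M2 y' h1 h2 hcase hM2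
      exact step k hk
    · obtain ⟨M2, hM2⟩ := exists_pow_bound hc0 (show (0:ℝ) < 1 - y' by linarith)
      obtain ⟨k, hk⟩ := hitA hc0 hc M2 y' h1 hcase h3 hM2
      exact step k hk

end CLuroth
namespace CLuroth

variable {c : ℝ}

/-- State machine: current point and number of switch-region visits so far. -/
def st (c x : ℝ) (b : ℕ → Bool) : ℕ → ℝ × ℕ
  | 0 => (x, 0)
  | n+1 =>
    if (st c x b n).1 ∈ SwitchS c then
      (Tc (b (st c x b n).2) c (st c x b n).1, (st c x b n).2 + 1)
    else (Tc false c (st c x b n).1, (st c x b n).2)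

/-- The path realizing the choices `b` at switch times. -/
def om (c x : ℝ) (b : ℕ → Bool) (n : ℕ) : Bool :=
  if (st c x b n).1 ∈ SwitchS c then b (st c x b n).2 else false

lemma Tom_eq_st (x : ℝ) (b : ℕ → Bool) : ∀ n, Tom c (om c x b) n x = (st c x b n).1 := by
  intro n
  induction n with
  | zero => rfl
  | succ n ih =>
    show Tc (om c x b n) c (Tom c (om c x b) n x) = _
    rw [ih, om, st]
    by_cases hS : (st c x b n).1 ∈ SwitchS c
    · rw [if_pos hS, if_pos hS]
    · rw [if_neg hS, if_neg hS]

lemma st_cnt_mono (x : ℝ) (b : ℕ → Bool) (n : ℕ) :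
    (st c x b n).2 ≤ (st c x b (n+1)).2 := by
  rw [st]
  by_cases hS : (st c x b n).1 ∈ SwitchS c
  · rw [if_pos hS]; omega
  · rw [if_neg hS]

lemma st_good (hc0 : 0 < c) (hc : c ≤ 2/5) {x : ℝ} (hxi : Irrational x)
    (hx : x ∈ Set.Icc c 1) (b : ℕ → Bool) (n : ℕ) :
    Irrational (st c x b n).1 ∧ (st c x b n).1 ∈ Set.Icc c 1 := by
  induction n with
  | zero => exact ⟨hxi, hx⟩
  | succ n ih =>
    rw [st]
    by_cases hS : (st c x b n).1 ∈ SwitchS c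
    · rw [if_pos hS]; exact Tc_good hc0 hc ih.1 ih.2 _
    · rw [if_neg hS]; exact Tc_good hc0 hc ih.1 ih.2 _

lemma st_off_run (x : ℝ) (b : ℕ → Bool) (n : ℕ) :
    ∀ i, (∀ i', i' < i → (Tc false c)^[i'] (st c x b n).1 ∉ SwitchS c) →
      st c x b (n+i) = ((Tc false c)^[i] (st c x b n).1, (st c x b n).2) := by
  intro i
  induction i with
  | zero => intro _; simp
  | succ i ih =>
    intro h
    have hprev := ih (fun i' hi' => h i' (by omega))
    have hoff : (Tc false c)^[i] (st c x b n).1 ∉ SwitchS c := h i (by omega)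
    have : n + (i+1) = (n+i) + 1 := by omega
    rw [this, st, hprev]
    simp only [hoff]
    rw [if_neg not_false, ← Function.iterate_succ_apply' (Tc false c)]

lemma st_future (hc0 : 0 < c) (hc : c ≤ 2/5) {x : ℝ} (hxi : Irrational x)
    (hx : x ∈ Set.Icc c 1) (b : ℕ → Bool) (n : ℕ) :
    ∃ n', n ≤ n' ∧ (st c x b n').1 ∈ SwitchS c ∧ (st c x b n').2 = (st c x b n).2 := by
  obtain ⟨hirr, hI⟩ := st_good hc0 hc hxi hx b n
  have hhit := hit hc0 hc hirr hI
  classical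
  let j := Nat.find hhit
  have hj : (Tc false c)^[j] (st c x b n).1 ∈ SwitchS c := Nat.find_spec hhit
  have hjmin : ∀ i' < j, (Tc false c)^[i'] (st c x b n).1 ∉ SwitchS c :=
    fun i' hi' => Nat.find_min hhit hi'
  have hrun := st_off_run x b n j hjmin
  exact ⟨n + j, by omega, by rw [hrun]; exact hj, by rw [hrun]⟩

lemma st_reach (hc0 : 0 < c) (hc : c ≤ 2/5) {x : ℝ} (hxi : Irrational x)
    (hx : x ∈ Set.Icc c 1) (b : ℕ → Bool) :
    ∀ m, ∃ n, (st c x b n).1 ∈ SwitchS c ∧ (st c x b n).2 = m := by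
  intro m
  induction m with
  | zero =>
    obtain ⟨n', -, hS, hcnt⟩ := st_future hc0 hc hxi hx b 0
    exact ⟨n', hS, by rw [hcnt]; rfl⟩
  | succ m ih =>
    obtain ⟨n, hS, hcnt⟩ := ih
    have hstep : (st c x b (n+1)).2 = m + 1 := by
      rw [st, if_pos hS, hcnt]
    obtain ⟨n', -, hS', hcnt'⟩ := st_future hc0 hc hxi hx b (n+1)
    exact ⟨n', hS', by rw [hcnt', hstep]⟩

lemma st_eq_of_agree (x : ℝ) {b b' : ℕ → Bool} {m : ℕ}
    (hagree : ∀ i, i < m → b i = b' i) :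
    ∀ n, (st c x b n).2 ≤ m → st c x b n = st c x b' n := by
  intro n
  induction n with
  | zero => intro _; rfl
  | succ n ih =>
    intro hle
    have hn : (st c x b n).2 ≤ m := le_trans (st_cnt_mono x b n) hle
    have he := ih hn
    by_cases hS : (st c x b n).1 ∈ SwitchS c
    · have hcnt : (st c x b (n+1)).2 = (st c x b n).2 + 1 := by rw [st, if_pos hS]
      have hklt : (st c x b n).2 < m := by omega
      rw [st, st, ← he, if_pos hS, if_pos hS, hagree _ hklt]
    · rw [st, st, ← he, if_neg hS, if_neg hS]

lemma sgn_at_S (hc0 : 0 < c) (hc : c ≤ 2/5) (ω : ℕ → Bool) (x : ℝ) (n : ℕ)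
    (hS : Tom c ω n x ∈ SwitchS c) :
    sgn c ω x n = if ω n then 1 else 0 := by
  rw [sgn, if_neg (ne_of_gt hc0)]
  have hng := S_not_gap hc0 hc hS
  have hne1 := S_ne_one hc0 hc hS
  cases hface : ω n with
  | false =>
    rw [if_pos (Or.inl ⟨rfl, hS⟩)]
    simp
  | true =>
    rw [if_neg]
    · simp
    · rintro (⟨habs, -⟩ | hgap | h1)
      · exact Bool.noConfusion habs
      · exact hng (by
          obtain ⟨d, hd, hg1, hg2⟩ := hgap
          exact ⟨d, hd, hg1, hg2⟩)
      · exact hne1 h1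

end CLuroth

/-- for `0 < c ≤ 2/5` every irrational `x ∈ [c,1]` has uncountably many
different `c`-Lüroth expansions. -/
theorem irrational_uncountably_many_expansions (c : ℝ) (hc0 : 0 < c) (hc : c ≤ 2/5)
    (x : ℝ) (hx : x ∈ Set.Icc c 1) (hxi : Irrational x) :
    ¬ Set.Countable {e : ℕ → ℕ × ℕ | ∃ ω : ℕ → Bool, expansion c ω x = e} := by
  intro hcount
  classical
  set Φ : (ℕ → Bool) → (ℕ → ℕ × ℕ) := fun b => expansion c (CLuroth.om c x b) x with hΦ
  have hrange : Set.range Φ ⊆ {e : ℕ → ℕ × ℕ | ∃ ω : ℕ → Bool, expansion c ω x = e} := by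
    rintro e ⟨b, rfl⟩
    exact ⟨CLuroth.om c x b, rfl⟩
  have hinj : Function.Injective Φ := by
    intro b b' hbb'
    by_contra hne
    have hex : ∃ i, b i ≠ b' i := Function.ne_iff.mp hne
    set m := Nat.find hex with hm
    have hmspec : b m ≠ b' m := Nat.find_spec hex
    have hagree : ∀ i, i < m → b i = b' i := by
      intro i hi
      by_contra h
      have hle : m ≤ i := Nat.find_le h
      omega
    obtain ⟨n, hS, hcnt⟩ := CLuroth.st_reach hc0 hc hxi hx b m
    have heq : CLuroth.st c x b n = CLuroth.st c x b' n :=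
      CLuroth.st_eq_of_agree x hagree n (le_of_eq hcnt)
    have hTom : Tom c (CLuroth.om c x b) n x = (CLuroth.st c x b n).1 :=
      CLuroth.Tom_eq_st x b n
    have hTom' : Tom c (CLuroth.om c x b') n x = (CLuroth.st c x b' n).1 :=
      CLuroth.Tom_eq_st x b' n
    have hS' : Tom c (CLuroth.om c x b') n x ∈ SwitchS c := by rw [hTom', ← heq]; exact hS
    have hSb : Tom c (CLuroth.om c x b) n x ∈ SwitchS c := by rw [hTom]; exact hS
    have hom : CLuroth.om c x b n = b m := by
      rw [CLuroth.om, if_pos hS, hcnt]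
    have hom' : CLuroth.om c x b' n = b' m := by
      rw [CLuroth.om, if_pos (heq ▸ hS), ← heq, hcnt]
    have hsgn := CLuroth.sgn_at_S hc0 hc (CLuroth.om c x b) x n hSb
    have hsgn' := CLuroth.sgn_at_S hc0 hc (CLuroth.om c x b') x n hS'
    rw [hom] at hsgn
    rw [hom'] at hsgn'
    have hval : sgn c (CLuroth.om c x b) x n ≠ sgn c (CLuroth.om c x b') x n := by
      rw [hsgn, hsgn']
      cases hb : b m <;> cases hb' : b' m <;> simp_all
    have : expansion c (CLuroth.om c x b) x n = expansion c (CLuroth.om c x b') x n := by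
      rw [show expansion c (CLuroth.om c x b) x = expansion c (CLuroth.om c x b') x from hbb']
    exact hval (congrArg Prod.fst this)
  -- uncountability of (ℕ → Bool)
  have hcnt' : Countable (ℕ → Bool) := by
    have hc1 : Countable {e : ℕ → ℕ × ℕ | ∃ ω : ℕ → Bool, expansion c ω x = e} :=
      hcount.to_subtype
    have hinj2 : Function.Injective
        (Set.codRestrict Φ {e : ℕ → ℕ × ℕ | ∃ ω : ℕ → Bool, expansion c ω x = e}
          (fun b => hrange ⟨b, rfl⟩)) :=
      fun a b h => hinj (congrArg Subtype.val h)
    exact hinj2.countable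
  -- contradiction via Cantor
  have hinjS : Function.Injective (fun s : Set ℕ => (fun n => decide (n ∈ s) : ℕ → Bool)) := by
    intro s t hst
    ext n
    have := congrFun hst n
    simpa using this
  have : Countable (Set ℕ) := hinjS.countable
  obtain ⟨f, hf⟩ := exists_injective_nat (Set ℕ)
  exact Function.cantor_injective f hf
end
end

section
/- Let c ∈ (0,1/2) and let ((s_n, d_n))_{n≥1} be a c-Lüroth admissible sequence, and put x = Σ_{n≥1} (−1)^{s_1+⋯+s_{n−1}} (d_n − 1 + s_n)/∏_{i=1}^{n} d_i(d_i−1). If s_1 = 0 then x ∈ [1/d_1 + c/(d_1(d_1−1)), 1/(d_1−1)]; if s_1 = 1 then x ∈ [1/d_1, 1/(d_1−1) − c/(d_1(d_1−1))]. -/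
open MeasureTheory Filter Set
open scoped Classical ENNReal

noncomputable section

lemma luroth_term_bound (a : ℕ → ℕ × ℕ) (h : ∀ n, (a n).1 ≤ 1 ∧ 2 ≤ (a n).2) (n : ℕ) :
    ‖(-1 : ℝ) ^ (∑ i ∈ Finset.range n, (a i).1) *
      (((a n).2 : ℝ) - 1 + ((a n).1 : ℝ)) /
      (∏ i ∈ Finset.range (n+1), (((a i).2 : ℝ) * (((a i).2 : ℝ) - 1)))‖ ≤ (1/2 : ℝ)^n := by
  have hd : ∀ i, (2:ℝ) ≤ ((a i).2 : ℝ) := fun i => by exact_mod_cast (h i).2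
  have hfac : ∀ i, (2:ℝ) ≤ ((a i).2:ℝ) * (((a i).2:ℝ)-1) := fun i => by nlinarith [hd i]
  have hP : (2:ℝ)^n ≤ ∏ i ∈ Finset.range n, (((a i).2:ℝ) * (((a i).2:ℝ)-1)) := by
    calc (2:ℝ)^n = ∏ _i ∈ Finset.range n, (2:ℝ) := by simp
    _ ≤ _ := Finset.prod_le_prod (by intros; norm_num) (fun i _ => hfac i)
  have hPpos : (0:ℝ) < ∏ i ∈ Finset.range n, (((a i).2:ℝ) * (((a i).2:ℝ)-1)) :=
    lt_of_lt_of_le (by positivity) hP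
  set P := ∏ i ∈ Finset.range n, (((a i).2:ℝ) * (((a i).2:ℝ)-1)) with hPdef
  have hs : ((a n).1 : ℝ) ≤ 1 := by exact_mod_cast (h n).1
  have hs0 : (0:ℝ) ≤ ((a n).1 : ℝ) := by positivity
  have hnum : (0:ℝ) ≤ ((a n).2:ℝ) - 1 + ((a n).1:ℝ) := by linarith [hd n]
  rw [Finset.prod_range_succ]
  have hDpos : (0:ℝ) < P * (((a n).2:ℝ) * (((a n).2:ℝ)-1)) :=
    mul_pos hPpos (by nlinarith [hd n])
  rw [Real.norm_eq_abs, abs_div, abs_mul, abs_pow, abs_neg, abs_one, one_pow, one_mul,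
    abs_of_nonneg hnum, abs_of_pos hDpos]
  have h1 : ((a n).2:ℝ) - 1 + ((a n).1:ℝ) ≤ ((a n).2:ℝ) := by linarith
  have h2 : (2:ℝ)^n * ((a n).2:ℝ) ≤ P * (((a n).2:ℝ) * (((a n).2:ℝ)-1)) :=
    mul_le_mul hP (by nlinarith [hd n]) (by linarith [hd n]) (le_of_lt hPpos)
  have hdne : ((a n).2:ℝ) ≠ 0 := by linarith [hd n]
  calc (((a n).2:ℝ) - 1 + ((a n).1:ℝ)) / (P * (((a n).2:ℝ) * (((a n).2:ℝ)-1)))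
      ≤ ((a n).2:ℝ) / ((2:ℝ)^n * ((a n).2:ℝ)) :=
        div_le_div₀ (by linarith [hd n]) h1 (by positivity) h2
    _ = (1/2:ℝ)^n := by
        rw [div_pow, one_pow, mul_comm, div_mul_eq_div_div, div_self hdne]

lemma luroth_summable (a : ℕ → ℕ × ℕ) (h : ∀ n, (a n).1 ≤ 1 ∧ 2 ≤ (a n).2) :
    Summable (fun n => (-1 : ℝ) ^ (∑ i ∈ Finset.range n, (a i).1) *
      (((a n).2 : ℝ) - 1 + ((a n).1 : ℝ)) /
      (∏ i ∈ Finset.range (n+1), (((a i).2 : ℝ) * (((a i).2 : ℝ) - 1)))) :=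
  Summable.of_norm_bounded summable_geometric_two (luroth_term_bound a h)

lemma lurothSum_shift (a : ℕ → ℕ × ℕ) (h : ∀ n, (a n).1 ≤ 1 ∧ 2 ≤ (a n).2) :
    lurothSum a = (((a 0).2:ℝ) - 1 + ((a 0).1:ℝ)) / (((a 0).2:ℝ) * (((a 0).2:ℝ) - 1))
      + (-1:ℝ)^((a 0).1) / (((a 0).2:ℝ) * (((a 0).2:ℝ) - 1))
          * lurothSum (fun n => a (n+1)) := by
  have hd0 : (2:ℝ) ≤ ((a 0).2 : ℝ) := by exact_mod_cast (h 0).2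
  have hf0 : ((a 0).2:ℝ) * (((a 0).2:ℝ) - 1) ≠ 0 := by nlinarith
  unfold lurothSum
  rw [Summable.tsum_eq_zero_add (luroth_summable a h)]
  congr 1
  · simp
  · rw [← tsum_mul_left]
    apply tsum_congr
    intro n
    have hprod : ∏ i ∈ Finset.range (n+1+1), (((a i).2 : ℝ) * (((a i).2 : ℝ) - 1))
        = (∏ i ∈ Finset.range (n+1), (((a (i+1)).2 : ℝ) * (((a (i+1)).2 : ℝ) - 1)))
          * (((a 0).2:ℝ) * (((a 0).2:ℝ) - 1)) := Finset.prod_range_succ' _ _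
    have hsum : ∑ i ∈ Finset.range (n+1), (a i).1
        = (∑ i ∈ Finset.range n, (a (i+1)).1) + (a 0).1 := Finset.sum_range_succ' _ _
    rw [hprod, hsum, pow_add]
    have hPne : (∏ i ∈ Finset.range (n+1), (((a (i+1)).2 : ℝ) * (((a (i+1)).2 : ℝ) - 1))) ≠ 0 := by
      apply Finset.prod_ne_zero_iff.mpr
      intro i _
      have : (2:ℝ) ≤ ((a (i+1)).2 : ℝ) := by exact_mod_cast (h (i+1)).2
      nlinarith
    field_simp

/-- the first sign of a `c`-Lüroth admissible sequence locates its value. -/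
theorem admissible_value_location (c : ℝ) (hc0 : 0 < c) (hc : c < 1/2)
    (a : ℕ → ℕ × ℕ) (ha : Admissible c a) :
    ((a 0).1 = 0 →
      lurothSum a ∈ Set.Icc
        (1 / ((a 0).2 : ℝ) + c / (((a 0).2 : ℝ) * (((a 0).2 : ℝ) - 1)))
        (1 / (((a 0).2 : ℝ) - 1))) ∧
    ((a 0).1 = 1 →
      lurothSum a ∈ Set.Icc
        (1 / ((a 0).2 : ℝ))
        (1 / (((a 0).2 : ℝ) - 1) - c / (((a 0).2 : ℝ) * (((a 0).2 : ℝ) - 1)))) := by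
  have hb : ∀ n, (a n).1 ≤ 1 ∧ 2 ≤ (a n).2 := fun n => ⟨(ha.1 n).1, (ha.1 n).2.1⟩
  have hshift := lurothSum_shift a hb
  have htail : lurothSum (fun n => a (n+1)) ∈ Set.Icc c 1 := by
    have := ha.2.1 1
    simpa [add_comm] using this
  have hD2' : (2:ℝ) ≤ ((a 0).2 : ℝ) := by exact_mod_cast (hb 0).2
  set y := lurothSum (fun n => a (n+1)) with hy
  set D := ((a 0).2 : ℝ) with hD
  have hD2 : (2:ℝ) ≤ D := hD2'
  have hDpos : (0:ℝ) < D := by linarith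
  have hD1 : (0:ℝ) < D - 1 := by linarith
  have hDD : (0:ℝ) < D * (D - 1) := by positivity
  obtain ⟨hyc, hy1⟩ := htail
  constructor
  · intro hs0
    rw [hshift, hs0]
    simp only [pow_zero, Nat.cast_zero, add_zero]
    constructor
    · have key : (D - 1) / (D * (D - 1)) + 1 / (D * (D - 1)) * y
          - (1 / D + c / (D * (D - 1))) = (y - c) / (D * (D - 1)) := by
        field_simp
        try ring
      have : (0:ℝ) ≤ (y - c) / (D * (D - 1)) := div_nonneg (by linarith) (le_of_lt hDD)
      linarith
    · have key : 1 / (D - 1) - ((D - 1) / (D * (D - 1)) + 1 / (D * (D - 1)) * y)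
          = (1 - y) / (D * (D - 1)) := by
        field_simp
        try ring
      have : (0:ℝ) ≤ (1 - y) / (D * (D - 1)) := div_nonneg (by linarith) (le_of_lt hDD)
      linarith
  · intro hs1
    rw [hshift, hs1]
    simp only [pow_one, Nat.cast_one]
    constructor
    · have key : (D - 1 + 1) / (D * (D - 1)) + (-1) / (D * (D - 1)) * y
          - 1 / D = (1 - y) / (D * (D - 1)) := by
        field_simp
        try ring
      have : (0:ℝ) ≤ (1 - y) / (D * (D - 1)) := div_nonneg (by linarith) (le_of_lt hDD)
      linarith
    · have key : (1 / (D - 1) - c / (D * (D - 1)))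
          - ((D - 1 + 1) / (D * (D - 1)) + (-1) / (D * (D - 1)) * y)
          = (y - c) / (D * (D - 1)) := by
        field_simp
        try ring
      have : (0:ℝ) ≤ (y - c) / (D * (D - 1)) := div_nonneg (by linarith) (le_of_lt hDD)
      linarith
end
end

section
/- Let c ∈ (0,1/2]. A sequence ((s_n, d_n))_{n≥1} ∈ 𝒜_c^ℕ is c-Lüroth admissible if and only if there exists a point (ω,x) ∈ {0,1}^ℕ × [c,1] such that s_n(ω,x) = s_n and d_n(ω,x) = d_n for all n ≥ 1. -/
open MeasureTheory Filter Set
open scoped Classical ENNReal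

noncomputable section

section Ladder
variable {c : ℝ}

lemma two_le_cast {d : ℕ} (hd : 2 ≤ d) : (2:ℝ) ≤ (d:ℝ) := by exact_mod_cast hd
lemma hd0' {d : ℕ} (hd : 2 ≤ d) : (0:ℝ) < (d:ℝ) := by have := two_le_cast hd; linarith
lemma hd1' {d : ℕ} (hd : 2 ≤ d) : (0:ℝ) < (d:ℝ) - 1 := by have := two_le_cast hd; linarith
lemma hP' {d : ℕ} (hd : 2 ≤ d) : (0:ℝ) < (d:ℝ) * ((d:ℝ)-1) := mul_pos (hd0' hd) (hd1' hd)

lemma zm_pred {d : ℕ} (hd : 2 ≤ d) :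
    zm c (d-1) = 1/((d:ℝ)-1) - c * (1/((d:ℝ)-1)) * (1/(d:ℝ)) := by
  have h : ((d-1 : ℕ) : ℝ) = (d:ℝ) - 1 := by
    have h1 : (1:ℕ) ≤ d := by omega
    push_cast [Nat.cast_sub h1]; ring
  rw [zm, h]; ring_nf

lemma eq_zp {d : ℕ} (hd : 2 ≤ d) : zp c d * ((d:ℝ) * ((d:ℝ)-1)) = (d:ℝ) - 1 + c := by
  have h0 := (hd0' hd).ne'; have h1 := (hd1' hd).ne'
  unfold zp; field_simp; try ring_nf; try tauto

lemma eq_zmp {d : ℕ} (hd : 2 ≤ d) : zm c (d-1) * ((d:ℝ) * ((d:ℝ)-1)) = (d:ℝ) - c := by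
  have h0 := (hd0' hd).ne'; have h1 := (hd1' hd).ne'
  rw [zm_pred hd]; field_simp; try ring_nf; try tauto

lemma eq_zd {d : ℕ} (hd : 2 ≤ d) : 1/(d:ℝ) * ((d:ℝ) * ((d:ℝ)-1)) = (d:ℝ) - 1 := by
  have h0 := (hd0' hd).ne'; field_simp; try ring

lemma eq_zd1 {d : ℕ} (hd : 2 ≤ d) : 1/((d:ℝ)-1) * ((d:ℝ) * ((d:ℝ)-1)) = (d:ℝ) := by
  have h1 := (hd1' hd).ne'; field_simp; try ring

lemma lt_zp (hc0 : 0 < c) {d : ℕ} (hd : 2 ≤ d) : 1/(d:ℝ) < zp c d := by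
  rw [← mul_lt_mul_iff_left₀ (hP' hd), eq_zp hd, eq_zd hd]; linarith

lemma zp_le_zmp (hc : c ≤ 1/2) {d : ℕ} (hd : 2 ≤ d) : zp c d ≤ zm c (d-1) := by
  rw [← mul_le_mul_iff_left₀ (hP' hd), eq_zp hd, eq_zmp hd]; linarith

lemma zmp_lt (hc0 : 0 < c) {d : ℕ} (hd : 2 ≤ d) : zm c (d-1) < 1/((d:ℝ)-1) := by
  rw [← mul_lt_mul_iff_left₀ (hP' hd), eq_zmp hd, eq_zd1 hd]; linarith

lemma succ_lt_zm (hc1 : c < 1) {e : ℕ} (he : 1 ≤ e) : 1/((e:ℝ)+1) < zm c e := by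
  have h2 : 2 ≤ e + 1 := by omega
  have hcast : ((e + 1 : ℕ) : ℝ) = (e:ℝ) + 1 := by push_cast; ring
  have key : zm c ((e+1)-1) = zm c e := by norm_num
  have h3 : 1/(((e+1:ℕ)):ℝ) < zm c ((e+1)-1) := by
    rw [← mul_lt_mul_iff_left₀ (hP' h2), eq_zmp h2, eq_zd h2, hcast]; linarith
  rw [key, hcast] at h3; exact h3

lemma zm_lt_self (hc0 : 0 < c) {e : ℕ} (he : 1 ≤ e) : zm c e < 1/(e:ℝ) := by
  have h1 : (0:ℝ) < (e:ℝ) := by exact_mod_cast he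
  have : 0 < c * (1/(e:ℝ)) * (1/((e:ℝ)+1)) :=
    mul_pos (mul_pos hc0 (one_div_pos.mpr h1)) (one_div_pos.mpr (by linarith))
  rw [zm]; linarith

-- digit uniqueness
lemma digit_unique {y : ℝ} {n d : ℕ} (hn : 2 ≤ n) (hd : 2 ≤ d)
    (h1 : 1/(n:ℝ) ≤ y) (h2 : y < 1/((n:ℝ)-1))
    (h3 : 1/(d:ℝ) ≤ y) (h4 : y < 1/((d:ℝ)-1)) : n = d := by
  have hnd : (d:ℝ) - 1 < (n:ℝ) := by
    by_contra hcon
    push_neg at hcon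
    have : 1/((d:ℝ)-1) ≤ 1/(n:ℝ) := one_div_le_one_div_of_le (hd0' hn) hcon
    linarith
  have hdn : (n:ℝ) - 1 < (d:ℝ) := by
    by_contra hcon
    push_neg at hcon
    have : 1/((n:ℝ)-1) ≤ 1/(d:ℝ) := one_div_le_one_div_of_le (hd0' hd) hcon
    linarith
  have e1 : d < n + 1 := by exact_mod_cast (by push_cast; linarith : ((d:ℝ)) < (n:ℝ) + 1)
  have e2 : n < d + 1 := by exact_mod_cast (by push_cast; linarith : ((n:ℝ)) < (d:ℝ) + 1)
  omega
end Ladder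

lemma ceil_inv_eq {y : ℝ} {d : ℕ} (hd : 2 ≤ d) (h1 : 1/(d:ℝ) ≤ y) (h2 : y < 1/((d:ℝ)-1)) :
    ⌈1/y⌉ = (d:ℤ) := by
  have hy0 : 0 < y := lt_of_lt_of_le (one_div_pos.mpr (hd0' hd)) h1
  rw [Int.ceil_eq_iff]
  constructor
  · push_cast
    rw [lt_div_iff₀ hy0]
    have := (lt_div_iff₀ (hd1' hd)).mp h2
    nlinarith
  · push_cast
    rw [div_le_iff₀ hy0]
    have := (div_le_iff₀ (hd0' hd)).mp h1
    nlinarith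

/-- existence of the digit for `y ∈ [c,1)`. -/
lemma digit_exists {c y : ℝ} (hc0 : 0 < c) (hy : y ∈ Set.Icc c 1) (hy1 : y ≠ 1) :
    ∃ d : ℕ, 2 ≤ d ∧ d ≤ ⌈1/c⌉₊ ∧ 1/(d:ℝ) ≤ y ∧ y < 1/((d:ℝ)-1) ∧ (⌈1/y⌉).toNat = d := by
  obtain ⟨hyc, hy2⟩ := hy
  have hy0 : 0 < y := lt_of_lt_of_le hc0 hyc
  have hylt : y < 1 := lt_of_le_of_ne hy2 hy1
  have hinv : 1 < 1/y := by rw [lt_div_iff₀ hy0]; linarith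
  have hceil2 : 2 ≤ ⌈1/y⌉ := by
    have : (1:ℤ) < ⌈1/y⌉ := by rw [Int.lt_ceil]; exact_mod_cast hinv
    omega
  refine ⟨(⌈1/y⌉).toNat, ?_, ?_, ?_, ?_, rfl⟩
  · omega
  · rw [Int.toNat_le]
    apply Int.ceil_le.mpr
    calc 1/y ≤ 1/c := by apply one_div_le_one_div_of_le hc0 hyc
    _ ≤ ((⌈1/c⌉₊:ℤ):ℝ) := by push_cast; exact Nat.le_ceil _
  · have hle : 1/y ≤ ((⌈1/y⌉).toNat : ℝ) := by
      have := Int.le_ceil (1/y)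
      have h' : ((⌈1/y⌉:ℤ):ℝ) = ((⌈1/y⌉).toNat : ℝ) := by
        norm_cast; omega
      linarith [this, h'.symm.le]
    have ht0 : (0:ℝ) < ((⌈1/y⌉).toNat : ℝ) := by
      exact_mod_cast (by omega : 0 < (⌈1/y⌉).toNat)
    rw [div_le_iff₀ ht0]
    rw [div_le_iff₀ hy0] at hle
    nlinarith
  · have hgt : ((⌈1/y⌉).toNat : ℝ) - 1 < 1/y := by
      have := Int.ceil_lt_add_one (1/y)
      have h' : ((⌈1/y⌉:ℤ):ℝ) = ((⌈1/y⌉).toNat : ℝ) := by norm_cast; omega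
      linarith
    have hd2 : (2:ℝ) ≤ ((⌈1/y⌉).toNat : ℝ) := by exact_mod_cast (by omega : 2 ≤ (⌈1/y⌉).toNat)
    rw [lt_div_iff₀ (by linarith : (0:ℝ) < ((⌈1/y⌉).toNat : ℝ) - 1)]
    rw [lt_div_iff₀ hy0] at hgt
    nlinarith

lemma toNat_2 : ((2:ℤ)).toNat = 2 := rfl

def dval (y : ℝ) : ℕ := if y = 1 then 2 else (⌈1/y⌉).toNat

def sval (c : ℝ) (j : Bool) (y : ℝ) : ℕ :=
  if (j = false ∧ y ∈ SwitchS c) ∨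
      (∃ d : ℕ, 1 ≤ d ∧ zm c d < y ∧ y < 1/(d:ℝ)) ∨ y = 1 then 0 else 1

lemma dig_eq_dval (c : ℝ) (ω : ℕ → Bool) (x : ℝ) (n : ℕ) :
    dig c ω x n = dval (Tom c ω n x) := rfl

lemma sgn_eq_sval {c : ℝ} (hc0 : c ≠ 0) (ω : ℕ → Bool) (x : ℝ) (n : ℕ) :
    sgn c ω x n = sval c (ω n) (Tom c ω n x) := by
  rw [sgn, sval, if_neg hc0]

lemma sval_le_one (c : ℝ) (j : Bool) (y : ℝ) : sval c j y ≤ 1 := by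
  rw [sval]; split <;> norm_num

lemma cast_pred {d : ℕ} (hd : 2 ≤ d) : ((d - 1 : ℕ) : ℝ) = (d:ℝ) - 1 := by
  have h1 : (1:ℕ) ≤ d := by omega
  push_cast [Nat.cast_sub h1]; ring

section Regions
variable {c y : ℝ} {d : ℕ}

/-- `TL` evaluation on the cylinder of digit `d`. -/
lemma TL_eval (hd : 2 ≤ d) (h1 : 1/(d:ℝ) ≤ y) (h2 : y < 1/((d:ℝ)-1)) :
    TL y = (d:ℝ) * ((d:ℝ)-1) * y - ((d:ℝ)-1) := by
  have hy0 : 0 < y := lt_of_lt_of_le (one_div_pos.mpr (hd0' hd)) h1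
  have hy1 : y < 1 := lt_of_lt_of_le h2 (by
    rw [div_le_one (hd1' hd)]; have := two_le_cast hd; linarith)
  rw [TL, if_neg hy0.ne', if_neg hy1.ne, ceil_inv_eq hd h1 h2]; push_cast; ring

lemma TA_eval (hd : 2 ≤ d) (h1 : 1/(d:ℝ) ≤ y) (h2 : y < 1/((d:ℝ)-1)) :
    TA y = (d:ℝ) - (d:ℝ) * ((d:ℝ)-1) * y := by
  rw [TA, TL_eval hd h1 h2]; ring

variable (hc0 : 0 < c) (hc : c ≤ 1/2) (hd : 2 ≤ d)
  (h1 : 1/(d:ℝ) ≤ y) (h2 : y < 1/((d:ℝ)-1))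

include hc0 hc hd h1 h2

/-- no `n` works in the `T_{0,c}` alternating condition when `zp c d ≤ y`. -/
lemma not_exA (hA : zp c d ≤ y) :
    ¬ ∃ n : ℕ, 2 ≤ n ∧ 1/(n:ℝ) ≤ y ∧ y < zp c n := by
  rintro ⟨n, hn, hn1, hn2⟩
  have h3 : y < 1/((n:ℝ)-1) :=
    lt_of_lt_of_le hn2 (le_trans (zp_le_zmp hc hn) (le_of_lt (zmp_lt hc0 hn)))
  have := digit_unique hn hd hn1 h3 h1 h2
  subst this; linarith

lemma not_exB (hC : zm c (d-1) < y) :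
    ¬ ∃ n : ℕ, 2 ≤ n ∧ 1/(n:ℝ) ≤ y ∧ y ≤ zm c (n-1) := by
  rintro ⟨n, hn, hn1, hn2⟩
  have h3 : y < 1/((n:ℝ)-1) := lt_of_le_of_lt hn2 (zmp_lt hc0 hn)
  have := digit_unique hn hd hn1 h3 h1 h2
  subst this; linarith

/-- characterization of the switch region on the digit-`d` cylinder. -/
lemma switch_iff (hy : y ∈ Set.Icc c 1) :
    y ∈ SwitchS c ↔ (zp c d ≤ y ∧ y ≤ zm c (d-1)) := by
  constructor
  · rintro ⟨-, n, hn, hn1, hn2⟩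
    have hl : 1/(n:ℝ) ≤ y := le_trans (le_of_lt (lt_zp hc0 hn)) hn1
    have hr : y < 1/((n:ℝ)-1) := lt_of_le_of_lt hn2 (zmp_lt hc0 hn)
    have := digit_unique hn hd hl hr h1 h2
    subst this; exact ⟨hn1, hn2⟩
  · rintro ⟨ha, hb⟩; exact ⟨hy, d, hd, ha, hb⟩

/-- characterization of the middle pieces on the digit-`d` cylinder. -/
lemma mid_iff : (∃ e : ℕ, 1 ≤ e ∧ zm c e < y ∧ y < 1/(e:ℝ)) ↔ zm c (d-1) < y := by
  constructor
  · rintro ⟨e, he, he1, he2⟩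
    have hcast : ((e + 1 : ℕ) : ℝ) = (e:ℝ) + 1 := by push_cast; ring
    have he2' : 2 ≤ e + 1 := by omega
    have hl : 1/((e+1:ℕ):ℝ) ≤ y := by
      rw [hcast]; exact le_of_lt (lt_trans (succ_lt_zm (by linarith) he) he1)
    have hr : y < 1/(((e+1:ℕ):ℝ)-1) := by rw [hcast]; simpa using he2
    have hed := digit_unique he2' hd hl hr h1 h2
    have : e = d - 1 := by omega
    subst this; exact he1
  · intro hC
    refine ⟨d - 1, by omega, hC, ?_⟩
    rw [cast_pred hd]; exact h2

end Regions

lemma Tc_one {c : ℝ} (hc0 : 0 < c) (j : Bool) : Tc j c 1 = 1 := by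
  rw [Tc, if_neg (fun h => hc0.ne' h.1), if_pos rfl]

lemma Tc_TA {c y : ℝ} (hc0 : 0 < c) {j : Bool} (hy1 : y ≠ 1)
    (h : (j = false ∧ ∃ n : ℕ, 2 ≤ n ∧ 1/(n:ℝ) ≤ y ∧ y < zp c n) ∨
         (j = true ∧ ∃ n : ℕ, 2 ≤ n ∧ 1/(n:ℝ) ≤ y ∧ y ≤ zm c (n-1))) :
    Tc j c y = TA y := by
  rw [Tc, if_neg (fun h' => hc0.ne' h'.1), if_neg hy1, if_pos h]

lemma Tc_TL {c y : ℝ} (hc0 : 0 < c) {j : Bool} (hy1 : y ≠ 1)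
    (h : ¬ ((j = false ∧ ∃ n : ℕ, 2 ≤ n ∧ 1/(n:ℝ) ≤ y ∧ y < zp c n) ∨
         (j = true ∧ ∃ n : ℕ, 2 ≤ n ∧ 1/(n:ℝ) ≤ y ∧ y ≤ zm c (n-1)))) :
    Tc j c y = TL y := by
  rw [Tc, if_neg (fun h' => hc0.ne' h'.1), if_neg hy1, if_neg h]

lemma two_le_ceil_inv {c : ℝ} (hc0 : 0 < c) (hc : c ≤ 1/2) : 2 ≤ ⌈1/c⌉₊ := by
  have h2 : (2:ℝ) ≤ 1/c := by rw [le_div_iff₀ hc0]; linarith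
  have h3 : (2:ℝ) ≤ (⌈1/c⌉₊ : ℝ) := le_trans h2 (Nat.le_ceil (1/c))
  exact_mod_cast h3

lemma step_lemma {c : ℝ} (hc0 : 0 < c) (hc : c ≤ 1/2) (j : Bool) {y : ℝ}
    (hy : y ∈ Set.Icc c 1) :
    2 ≤ dval y ∧ dval y ≤ ⌈1/c⌉₊ ∧ sval c j y ≤ 1 ∧ Tc j c y ∈ Set.Icc c 1 ∧
    ((dval y : ℝ) * ((dval y : ℝ) - 1)) * y
      = (dval y : ℝ) - 1 + (sval c j y : ℝ) + (-1)^(sval c j y) * Tc j c y ∧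
    (sval c j y = 0 → y ≠ 1 → Tc j c y ≠ 1) := by
  rcases eq_or_ne y 1 with hy1 | hy1
  · subst hy1
    have hd : dval 1 = 2 := by rw [dval, if_pos rfl]
    have hs : sval c j 1 = 0 := by rw [sval, if_pos (Or.inr (Or.inr rfl))]
    rw [hd, hs, Tc_one hc0]
    refine ⟨le_refl 2, two_le_ceil_inv hc0 hc, by norm_num, ⟨le_of_lt (by linarith), le_refl 1⟩,
      by norm_num, fun _ h => absurd rfl h⟩
  · obtain ⟨d, hd, hdc, h1, h2, htn⟩ := digit_exists hc0 hy hy1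
    have hdval : dval y = d := by rw [dval, if_neg hy1]; exact htn
    have hP := hP' hd
    have hcm : y * ((d:ℝ) * ((d:ℝ)-1)) = (d:ℝ) * ((d:ℝ)-1) * y := mul_comm _ _
    have h2r := two_le_cast hd
    -- scaled bounds
    have h1' : (d:ℝ) - 1 ≤ y * ((d:ℝ) * ((d:ℝ)-1)) := by
      have h := mul_le_mul_of_nonneg_right h1 (le_of_lt hP)
      rwa [eq_zd hd] at h
    have h2' : y * ((d:ℝ) * ((d:ℝ)-1)) < (d:ℝ) := by
      have h := (mul_lt_mul_iff_left₀ hP).mpr h2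
      rwa [eq_zd1 hd] at h
    have hTL : TL y = (d:ℝ) * ((d:ℝ)-1) * y - ((d:ℝ)-1) := TL_eval hd h1 h2
    have hTA : TA y = (d:ℝ) - (d:ℝ) * ((d:ℝ)-1) * y := TA_eval hd h1 h2
    have main : Tc j c y ∈ Set.Icc c 1 ∧
        ((dval y : ℝ) * ((dval y : ℝ) - 1)) * y
          = (dval y : ℝ) - 1 + (sval c j y : ℝ) + (-1)^(sval c j y) * Tc j c y ∧
        (sval c j y = 0 → y ≠ 1 → Tc j c y ≠ 1) := by
      rcases lt_or_ge y (zp c d) with hA | hA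
      · -- region A : alternating branch, sign 1
        have hs : sval c j y = 1 := by
          rw [sval, if_neg]
          rintro (⟨hj, hSw⟩ | hmid | hy1')
          · have := ((switch_iff hc0 hc hd h1 h2 hy).mp hSw).1; linarith
          · have h3 := (mid_iff hc0 hc hd h1 h2).mp hmid
            have := zp_le_zmp hc hd; linarith
          · exact hy1 hy1'
        have hT : Tc j c y = TA y := by
          apply Tc_TA hc0 hy1
          cases j
          · exact Or.inl ⟨rfl, d, hd, h1, hA⟩
          · exact Or.inr ⟨rfl, d, hd, h1, le_trans (le_of_lt hA) (zp_le_zmp hc hd)⟩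
        have hA' : y * ((d:ℝ) * ((d:ℝ)-1)) < (d:ℝ) - 1 + c := by
          have h := (mul_lt_mul_iff_left₀ hP).mpr hA; rwa [eq_zp hd] at h
        rw [hdval, hs, hT, hTA]
        refine ⟨⟨by linarith [hcm], by linarith [hcm]⟩, by norm_num; try ring, fun h => absurd h one_ne_zero⟩
      · rcases le_or_gt y (zm c (d-1)) with hB | hC
        · -- region B : switch region
          have hA' : (d:ℝ) - 1 + c ≤ y * ((d:ℝ) * ((d:ℝ)-1)) := by
            have h := mul_le_mul_of_nonneg_right hA (le_of_lt hP); rwa [eq_zp hd] at h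
          have hB' : y * ((d:ℝ) * ((d:ℝ)-1)) ≤ (d:ℝ) - c := by
            have h := mul_le_mul_of_nonneg_right hB (le_of_lt hP); rwa [eq_zmp hd] at h
          cases j with
          | false =>
            have hs : sval c false y = 0 := by
              rw [sval, if_pos (Or.inl ⟨rfl, (switch_iff hc0 hc hd h1 h2 hy).mpr ⟨hA, hB⟩⟩)]
            have hT : Tc false c y = TL y := by
              apply Tc_TL hc0 hy1
              rintro (⟨-, hex⟩ | ⟨hj, -⟩)
              · exact not_exA hc0 hc hd h1 h2 hA hex
              · exact Bool.noConfusion hj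
            rw [hdval, hs, hT, hTL]
            refine ⟨⟨by linarith [hcm], by linarith [hcm]⟩, by norm_num; try ring, fun _ _ h => by linarith [hcm]⟩
          | true =>
            have hs : sval c true y = 1 := by
              rw [sval, if_neg]
              rintro (⟨hj, -⟩ | hmid | hy1')
              · exact Bool.noConfusion hj
              · have h3 := (mid_iff hc0 hc hd h1 h2).mp hmid; linarith
              · exact hy1 hy1'
            have hT : Tc true c y = TA y :=
              Tc_TA hc0 hy1 (Or.inr ⟨rfl, d, hd, h1, hB⟩)
            rw [hdval, hs, hT, hTA]
            refine ⟨⟨by linarith [hcm], by linarith [hcm]⟩, by norm_num; try ring,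
              fun h => absurd h one_ne_zero⟩
        · -- region C : Lüroth branch, sign 0
          have hC' : (d:ℝ) - c < y * ((d:ℝ) * ((d:ℝ)-1)) := by
            have h := (mul_lt_mul_iff_left₀ hP).mpr hC; rwa [eq_zmp hd] at h
          have hs : sval c j y = 0 := by
            rw [sval, if_pos (Or.inr (Or.inl ((mid_iff hc0 hc hd h1 h2).mpr hC)))]
          have hT : Tc j c y = TL y := by
            apply Tc_TL hc0 hy1
            rintro (⟨-, hex⟩ | ⟨-, hex⟩)
            · exact not_exA hc0 hc hd h1 h2 (le_trans (zp_le_zmp hc hd) (le_of_lt hC)) hex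
            · exact not_exB hc0 hc hd h1 h2 hC hex
          rw [hdval, hs, hT, hTL]
          refine ⟨⟨by linarith [hcm], by linarith [hcm]⟩, by norm_num; try ring, fun _ _ h => by linarith [hcm]⟩
    exact ⟨hdval ▸ hd, hdval ▸ hdc, sval_le_one c j y, main⟩

def lterm (b : ℕ → ℕ × ℕ) (n : ℕ) : ℝ :=
  (-1 : ℝ) ^ (∑ i ∈ Finset.range n, (b i).1) *
    (((b n).2 : ℝ) - 1 + ((b n).1 : ℝ)) /
    (∏ i ∈ Finset.range (n+1), (((b i).2 : ℝ) * (((b i).2 : ℝ) - 1)))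

lemma lurothSum_eq_tsum (b : ℕ → ℕ × ℕ) : lurothSum b = ∑' n, lterm b n := rfl

section Series
variable {b : ℕ → ℕ × ℕ} (hb1 : ∀ n, (b n).1 ≤ 1) (hb2 : ∀ n, 2 ≤ (b n).2)

include hb2 in
lemma q_ge (n : ℕ) : (2:ℝ) ≤ ((b n).2 : ℝ) * (((b n).2:ℝ) - 1) := by
  have h := two_le_cast (hb2 n); nlinarith

include hb2 in
lemma prod_ge (n : ℕ) :
    (2:ℝ)^n ≤ ∏ i ∈ Finset.range n, (((b i).2 : ℝ) * (((b i).2 : ℝ) - 1)) := by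
  induction n with
  | zero => simp
  | succ n ih =>
    rw [Finset.prod_range_succ, pow_succ]
    have h1 := q_ge hb2 n
    have h2 : (0:ℝ) < 2^n := by positivity
    nlinarith

include hb2 in
lemma prod_pos' (n : ℕ) :
    (0:ℝ) < ∏ i ∈ Finset.range n, (((b i).2 : ℝ) * (((b i).2 : ℝ) - 1)) :=
  lt_of_lt_of_le (by positivity) (prod_ge hb2 n)

include hb1 hb2 in
lemma lterm_abs (n : ℕ) : |lterm b n| ≤ (1/2)^n := by
  have hq := q_ge hb2 n
  have hs : ((b n).1 : ℝ) ≤ 1 := by exact_mod_cast hb1 n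
  have hd := two_le_cast (hb2 n)
  have hP := prod_pos' hb2 n
  have hPs := prod_ge hb2 n
  have hnum : (0:ℝ) ≤ ((b n).2:ℝ) - 1 + ((b n).1:ℝ) := by linarith
  rw [lterm, Finset.prod_range_succ, abs_div, abs_mul, abs_pow, abs_neg, abs_one,
    one_pow, one_mul]
  rw [abs_of_nonneg hnum, abs_of_pos (by nlinarith)]
  rw [div_le_iff₀ (by nlinarith)]
  have h2n : (0:ℝ) < 2^n := by positivity
  have hhalf : ((1:ℝ)/2)^n = 1/2^n := by rw [div_pow, one_pow]
  rw [hhalf]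
  rw [div_mul_eq_mul_div, le_div_iff₀ h2n]
  have hb : ((b n).2:ℝ) - 1 + ((b n).1:ℝ) ≤ ((b n).2:ℝ) * (((b n).2:ℝ)-1) := by nlinarith
  calc (((b n).2:ℝ) - 1 + ((b n).1:ℝ)) * 2^n
      ≤ (((b n).2:ℝ) * (((b n).2:ℝ)-1)) * (∏ i ∈ Finset.range n, (((b i).2 : ℝ) * (((b i).2 : ℝ) - 1))) := by nlinarith
    _ = _ := by ring

include hb1 hb2 in
lemma summable_lterm : Summable (lterm b) := by
  have : Summable (fun n : ℕ => ((1:ℝ)/2)^n) :=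
    summable_geometric_of_lt_one (by norm_num) (by norm_num)
  refine Summable.of_abs (Summable.of_nonneg_of_le (fun n => abs_nonneg _)
    (fun n => lterm_abs hb1 hb2 n) this)

include hb1 hb2 in
lemma lurothSum_rec :
    (((b 0).2 : ℝ) * (((b 0).2 : ℝ) - 1)) * lurothSum b
      = ((b 0).2 : ℝ) - 1 + ((b 0).1 : ℝ)
        + (-1:ℝ)^((b 0).1) * lurothSum (fun n => b (1 + n)) := by
  have hq0 : (0:ℝ) < ((b 0).2:ℝ) * (((b 0).2:ℝ) - 1) := by
    have := two_le_cast (hb2 0); nlinarith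
  have hkey : ∀ n, lterm b (n+1)
      = ((-1:ℝ)^((b 0).1) / (((b 0).2:ℝ) * (((b 0).2:ℝ) - 1)))
        * lterm (fun k => b (1 + k)) n := by
    intro n
    have hsum : ∑ i ∈ Finset.range (n+1), (b i).1
        = (∑ i ∈ Finset.range n, (b (1 + i)).1) + (b 0).1 := by
      rw [Finset.sum_range_succ']
      exact congrArg (· + (b 0).1) (Finset.sum_congr rfl (fun i _ => by rw [add_comm]))
    have hprod : ∏ i ∈ Finset.range (n+1+1), (((b i).2 : ℝ) * (((b i).2 : ℝ) - 1))
        = (∏ i ∈ Finset.range (n+1), (((b (1+i)).2 : ℝ) * (((b (1+i)).2 : ℝ) - 1)))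
          * (((b 0).2:ℝ) * (((b 0).2:ℝ) - 1)) := by
      rw [Finset.prod_range_succ']
      exact congrArg (· * _) (Finset.prod_congr rfl (fun i _ => by rw [add_comm]))
    rw [lterm, lterm, hsum, hprod, pow_add, add_comm n 1]
    have hP : (0:ℝ) < ∏ i ∈ Finset.range (n+1), (((b (1+i)).2 : ℝ) * (((b (1+i)).2 : ℝ) - 1)) :=
      prod_pos' (b := fun k => b (1 + k)) (fun n => hb2 (1+n)) (n+1)
    field_simp
  have hsummable := summable_lterm hb1 hb2
  have h0 : lurothSum b = lterm b 0 + ∑' n, lterm b (n+1) := hsummable.tsum_eq_zero_add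
  have h1 : (∑' n, lterm b (n+1))
      = ((-1:ℝ)^((b 0).1) / (((b 0).2:ℝ) * (((b 0).2:ℝ) - 1)))
        * lurothSum (fun n => b (1 + n)) := by
    rw [tsum_congr hkey, tsum_mul_left]; rfl
  have ht0 : lterm b 0 = (((b 0).2:ℝ) - 1 + ((b 0).1:ℝ)) / (((b 0).2:ℝ) * (((b 0).2:ℝ) - 1)) := by
    rw [lterm]; simp
  rw [h0, h1, ht0]
  have hd0 : ((b 0).2:ℝ) ≠ 0 := (hd0' (hb2 0)).ne'
  have hd1 : ((b 0).2:ℝ) - 1 ≠ 0 := (hd1' (hb2 0)).ne'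
  field_simp
  try ring

end Series

section MainLemmas
variable {c : ℝ}

lemma tom_mem (hc0 : 0 < c) (hc : c ≤ 1/2) (ω : ℕ → Bool) {x : ℝ}
    (hx : x ∈ Set.Icc c 1) : ∀ n, Tom c ω n x ∈ Set.Icc c 1 := by
  intro n
  induction n with
  | zero => exact hx
  | succ n ih => exact (step_lemma hc0 hc (ω n) ih).2.2.2.1

lemma tom_shift (ω : ℕ → Bool) (x : ℝ) (k : ℕ) :
    ∀ n, Tom c ω (k+n) x = Tom c (fun i => ω (k+i)) n (Tom c ω k x) := by
  intro n
  induction n with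
  | zero => rfl
  | succ n ih => show Tc (ω (k+n)) c (Tom c ω (k+n) x) = _; rw [ih]; rfl

lemma expansion_shift (ω : ℕ → Bool) (x : ℝ) (k n : ℕ) :
    expansion c ω x (k+n) = expansion c (fun i => ω (k+i)) (Tom c ω k x) n := by
  unfold expansion dig sgn
  rw [tom_shift ω x k n]

lemma exp_fst (hc0 : 0 < c) (ω : ℕ → Bool) (x : ℝ) (n : ℕ) :
    (expansion c ω x n).1 = sval c (ω n) (Tom c ω n x) := sgn_eq_sval hc0.ne' ω x n

lemma exp_snd (ω : ℕ → Bool) (x : ℝ) (n : ℕ) :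
    (expansion c ω x n).2 = dval (Tom c ω n x) := rfl

lemma exp_alphabet (hc0 : 0 < c) (hc : c ≤ 1/2) (ω : ℕ → Bool) {x : ℝ}
    (hx : x ∈ Set.Icc c 1) (n : ℕ) :
    (expansion c ω x n).1 ≤ 1 ∧ 2 ≤ (expansion c ω x n).2 ∧ (expansion c ω x n).2 ≤ ⌈1/c⌉₊ := by
  have h := step_lemma hc0 hc (ω n) (tom_mem hc0 hc ω hx n)
  rw [exp_fst hc0, exp_snd]
  exact ⟨h.2.2.1, h.1, h.2.1⟩

/-- the c-Lüroth series of the expansion of `y` converges to `y`. -/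
lemma lurothSum_expansion (hc0 : 0 < c) (hc : c ≤ 1/2) (ω : ℕ → Bool) {y : ℝ}
    (hy : y ∈ Set.Icc c 1) : lurothSum (expansion c ω y) = y := by
  set E := expansion c ω y with hE
  have hE1 : ∀ n, (E n).1 ≤ 1 := fun n => (exp_alphabet hc0 hc ω hy n).1
  have hE2 : ∀ n, 2 ≤ (E n).2 := fun n => (exp_alphabet hc0 hc ω hy n).2.1
  have hid : ∀ n, ((E n).2:ℝ) * (((E n).2:ℝ) - 1) * Tom c ω n y
      = ((E n).2:ℝ) - 1 + ((E n).1:ℝ) + (-1:ℝ)^((E n).1) * Tom c ω (n+1) y := by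
    intro n
    have h := (step_lemma hc0 hc (ω n) (tom_mem hc0 hc ω hy n)).2.2.2.2.1
    rw [hE, exp_fst hc0, exp_snd]
    exact h
  have hpartial : ∀ n, y - (∑ k ∈ Finset.range n, lterm E k)
      = (-1:ℝ)^(∑ i ∈ Finset.range n, (E i).1) * Tom c ω n y
        / ∏ i ∈ Finset.range n, (((E i).2:ℝ) * (((E i).2:ℝ) - 1)) := by
    intro n
    induction n with
    | zero => simp [Tom]
    | succ n ih =>
      have hq : (0:ℝ) < ((E n).2:ℝ) * (((E n).2:ℝ) - 1) := by
        have := two_le_cast (hE2 n); nlinarith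
      have hP : (0:ℝ) < ∏ i ∈ Finset.range n, (((E i).2:ℝ) * (((E i).2:ℝ) - 1)) :=
        prod_pos' hE2 n
      have hid' : (-1:ℝ)^((E n).1) * Tom c ω (n+1) y
          = ((E n).2:ℝ) * (((E n).2:ℝ) - 1) * Tom c ω n y - (((E n).2:ℝ) - 1 + ((E n).1:ℝ)) := by
        have := hid n; linarith
      calc y - (∑ k ∈ Finset.range (n+1), lterm E k)
          = (y - ∑ k ∈ Finset.range n, lterm E k) - lterm E n := by
            rw [Finset.sum_range_succ]; ring
        _ = (-1:ℝ)^(∑ i ∈ Finset.range n, (E i).1) * Tom c ω n y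
              / ∏ i ∈ Finset.range n, (((E i).2:ℝ) * (((E i).2:ℝ) - 1))
            - (-1:ℝ)^(∑ i ∈ Finset.range n, (E i).1) * (((E n).2:ℝ) - 1 + ((E n).1:ℝ))
              / ((∏ i ∈ Finset.range n, (((E i).2:ℝ) * (((E i).2:ℝ) - 1)))
                 * (((E n).2:ℝ) * (((E n).2:ℝ) - 1))) := by
            rw [ih, lterm, Finset.prod_range_succ]
        _ = (-1:ℝ)^(∑ i ∈ Finset.range (n+1), (E i).1) * Tom c ω (n+1) y
            / ∏ i ∈ Finset.range (n+1), (((E i).2:ℝ) * (((E i).2:ℝ) - 1)) := by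
            have hPne := hP.ne'
            have hqne := hq.ne'
            rw [Finset.sum_range_succ, pow_add, Finset.prod_range_succ]
            rw [show (-1:ℝ)^(∑ i ∈ Finset.range n, (E i).1) * Tom c ω n y
                  / ∏ i ∈ Finset.range n, (((E i).2:ℝ) * (((E i).2:ℝ) - 1))
                = (-1:ℝ)^(∑ i ∈ Finset.range n, (E i).1) * Tom c ω n y
                    * (((E n).2:ℝ) * (((E n).2:ℝ) - 1))
                  / ((∏ i ∈ Finset.range n, (((E i).2:ℝ) * (((E i).2:ℝ) - 1)))
                    * (((E n).2:ℝ) * (((E n).2:ℝ) - 1))) from by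
              rw [mul_div_mul_right _ _ hqne]]
            rw [div_sub_div_same]
            congr 1
            linear_combination (-((-1:ℝ)^(∑ i ∈ Finset.range n, (E i).1))) * hid'
  have hbound : ∀ n, |(∑ k ∈ Finset.range n, lterm E k) - y| ≤ (1/2)^n := by
    intro n
    rw [abs_sub_comm, hpartial n, abs_div, abs_mul, abs_pow, abs_neg, abs_one, one_pow, one_mul]
    have hP := prod_pos' hE2 n
    have hPge := prod_ge hE2 n
    have hT := tom_mem hc0 hc ω hy n
    have hTabs : |Tom c ω n y| ≤ 1 := abs_le.mpr ⟨by linarith [hT.1], hT.2⟩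
    rw [abs_of_pos hP, div_le_iff₀ hP]
    have h2n : (0:ℝ) < 2^n := by positivity
    have : ((1:ℝ)/2)^n * 2^n = 1 := by
      rw [div_pow, one_pow, div_mul_cancel₀]; positivity
    nlinarith [abs_nonneg (Tom c ω n y)]
  have hsum := summable_lterm hE1 hE2
  have h1 : Filter.Tendsto (fun n => ∑ k ∈ Finset.range n, lterm E k)
      Filter.atTop (nhds y) := by
    rw [tendsto_iff_dist_tendsto_zero]
    refine squeeze_zero (fun n => dist_nonneg) (fun n => ?_)
      (tendsto_pow_atTop_nhds_zero_of_lt_one (r := (1:ℝ)/2) (by norm_num) (by norm_num))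
    rw [Real.dist_eq]; exact hbound n
  have h2 := hsum.hasSum.tendsto_sum_nat
  exact tendsto_nhds_unique h2 h1

end MainLemmas

section RealStep
variable {c : ℝ}

/-- realization: given the algebraic relation, the expansion data at `y` is `(s,d)` and
the map sends `y` to `y'`. -/
lemma real_step (hc0 : 0 < c) (hc : c ≤ 1/2) {s d : ℕ} {y y' : ℝ} {j : Bool}
    (hs : s ≤ 1) (hd : 2 ≤ d) (hy : y ∈ Set.Icc c 1) (hy' : y' ∈ Set.Icc c 1)
    (heq : ((d:ℝ) * ((d:ℝ)-1)) * y = (d:ℝ) - 1 + (s:ℝ) + (-1:ℝ)^s * y')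
    (hnd : s = 0 → y' = 1 → d = 2)
    (hj : j = decide (s = 1)) :
    dval y = d ∧ sval c j y = s ∧ Tc j c y = y' := by
  have hP := hP' hd
  have h2r := two_le_cast hd
  rcases Nat.le_one_iff_eq_zero_or_eq_one.mp hs with hs0 | hs1
  · -- s = 0 : y * P = d - 1 + y'
    subst hs0
    have hj' : j = false := by rw [hj]; rfl
    subst hj'
    norm_num at heq
    -- heq : d * (d-1) * y = d - 1 + y'
    rcases eq_or_ne y' 1 with hy'1 | hy'1
    · -- degenerate : d = 2 and y = 1
      have hd2 := hnd rfl hy'1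
      subst hd2
      have hy1 : y = 1 := by rw [hy'1] at heq; norm_num at heq; linarith
      subst hy1
      refine ⟨by rw [dval, if_pos rfl], by rw [sval, if_pos (Or.inr (Or.inr rfl))], ?_⟩
      rw [Tc_one hc0, hy'1]
    · have hy'lt : y' < 1 := lt_of_le_of_ne hy'.2 hy'1
      have h1 : zp c d ≤ y := by
        rw [← mul_le_mul_iff_left₀ hP, eq_zp hd, mul_comm y]
        linarith [hy'.1]
      have h2 : y < 1/((d:ℝ)-1) := by
        rw [← mul_lt_mul_iff_left₀ hP, eq_zd1 hd, mul_comm y]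
        linarith
      have h1' : 1/(d:ℝ) ≤ y := le_trans (le_of_lt (lt_zp hc0 hd)) h1
      have hy1 : y ≠ 1 := by
        intro h; subst h
        have hle : 1/((d:ℝ)-1) ≤ 1 := by rw [div_le_one (hd1' hd)]; linarith
        linarith
      have hdval : dval y = d := by
        rw [dval, if_neg hy1, ceil_inv_eq hd h1' h2]; rfl
      have hTc : Tc false c y = TL y := by
        apply Tc_TL hc0 hy1
        rintro (⟨-, hex⟩ | ⟨hcontra, -⟩)
        · exact not_exA hc0 hc hd h1' h2 h1 hex
        · exact Bool.noConfusion hcontra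
      have hTL : TL y = y' := by
        rw [TL_eval hd h1' h2]; linarith
      have hsval : sval c false y = 0 := by
        rcases le_or_gt y (zm c (d-1)) with hB | hC
        · rw [sval, if_pos (Or.inl ⟨rfl, (switch_iff hc0 hc hd h1' h2 hy).mpr ⟨h1, hB⟩⟩)]
        · rw [sval, if_pos (Or.inr (Or.inl ((mid_iff hc0 hc hd h1' h2).mpr hC)))]
      exact ⟨hdval, hsval, by rw [hTc, hTL]⟩
  · -- s = 1 : y * P = d - y'
    subst hs1
    have hj' : j = true := by rw [hj]; rfl
    subst hj'
    norm_num at heq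
    -- heq : d * (d-1) * y = d - 1 + 1 - y' (as normalized)
    have h1 : 1/(d:ℝ) ≤ y := by
      rw [← mul_le_mul_iff_left₀ hP, eq_zd hd, mul_comm y]
      linarith [hy'.2]
    have hB : y ≤ zm c (d-1) := by
      rw [← mul_le_mul_iff_left₀ hP, eq_zmp hd, mul_comm y]
      linarith [hy'.1]
    have h2 : y < 1/((d:ℝ)-1) := lt_of_le_of_lt hB (zmp_lt hc0 hd)
    have hy1 : y ≠ 1 := by
      intro h; subst h
      have hle : 1/((d:ℝ)-1) ≤ 1 := by rw [div_le_one (hd1' hd)]; linarith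
      linarith
    have hdval : dval y = d := by
      rw [dval, if_neg hy1, ceil_inv_eq hd h1 h2]; rfl
    have hTc : Tc true c y = TA y :=
      Tc_TA hc0 hy1 (Or.inr ⟨rfl, d, hd, h1, hB⟩)
    have hTA : TA y = y' := by
      rw [TA_eval hd h1 h2]; linarith
    have hsval : sval c true y = 1 := by
      rw [sval, if_neg]
      rintro (⟨hcontra, -⟩ | hmid | hy1')
      · exact Bool.noConfusion hcontra
      · have h3 := (mid_iff hc0 hc hd h1 h2).mp hmid; linarith
      · exact hy1 hy1'
    exact ⟨hdval, hsval, by rw [hTc, hTA]⟩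

end RealStep

section Directions
variable {c : ℝ}

lemma sum_one_step (hc0 : 0 < c) {b : ℕ → ℕ × ℕ}
    (hb1 : ∀ n, (b n).1 ≤ 1) (hb2 : ∀ n, 2 ≤ (b n).2)
    (hy' : lurothSum (fun n => b (1 + n)) ∈ Set.Icc c 1)
    (h : lurothSum b = 1) :
    b 0 = (0, 2) ∧ lurothSum (fun n => b (1 + n)) = 1 := by
  have hrec := lurothSum_rec hb1 hb2
  rw [h, mul_one] at hrec
  have hd := two_le_cast (hb2 0)
  rcases Nat.le_one_iff_eq_zero_or_eq_one.mp (hb1 0) with hs0 | hs1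
  · rw [hs0] at hrec; norm_num at hrec
    have hdle : ((b 0).2:ℝ) ≤ 2 := by
      nlinarith [hy'.2, sq_nonneg (((b 0).2:ℝ) - 2)]
    have hdeq : ((b 0).2:ℝ) = 2 := le_antisymm hdle hd
    have hd2 : (b 0).2 = 2 := by exact_mod_cast hdeq
    have hy1 : lurothSum (fun n => b (1 + n)) = 1 := by rw [hdeq] at hrec; linarith
    exact ⟨Prod.ext hs0 hd2, hy1⟩
  · exfalso
    rw [hs1] at hrec; norm_num at hrec
    nlinarith [hy'.1, hc0, mul_nonneg (by linarith : (0:ℝ) ≤ ((b 0).2:ℝ))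
      (by linarith : (0:ℝ) ≤ ((b 0).2:ℝ) - 2)]

lemma sum_one_all (hc0 : 0 < c) {b : ℕ → ℕ × ℕ}
    (hb1 : ∀ n, (b n).1 ≤ 1) (hb2 : ∀ n, 2 ≤ (b n).2)
    (htails : ∀ k, lurothSum (fun n => b (k + n)) ∈ Set.Icc c 1)
    (h : lurothSum b = 1) : ∀ n, b n = (0, 2) := by
  have hshift : ∀ n m : ℕ, (fun k => b (n + (m + k))) = (fun k => b ((n + m) + k)) := by
    intro n m; funext k; congr 1; omega
  have key : ∀ n, lurothSum (fun k => b (n + k)) = 1 := by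
    intro n
    induction n with
    | zero => rw [show (fun k => b (0 + k)) = b from funext fun k => by rw [Nat.zero_add]]; exact h
    | succ n ih =>
      have hstep := sum_one_step hc0 (b := fun k => b (n + k))
        (fun m => hb1 (n + m)) (fun m => hb2 (n + m))
        (by rw [hshift n 1]; exact htails (n + 1)) ih
      rw [hshift n 1] at hstep
      exact hstep.2
  intro n
  have hstep := sum_one_step hc0 (b := fun k => b (n + k))
    (fun m => hb1 (n + m)) (fun m => hb2 (n + m))
    (by rw [hshift n 1]; exact htails (n + 1)) (key n)
  simpa using hstep.1

/-- forward direction. -/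
lemma admissible_realized (hc0 : 0 < c) (hc : c ≤ 1/2) {a : ℕ → ℕ × ℕ}
    (hadm : Admissible c a) :
    ∃ (ω : ℕ → Bool) (x : ℝ), x ∈ Set.Icc c 1 ∧ ∀ n, expansion c ω x n = a n := by
  obtain ⟨ha, htails, hexcl⟩ := hadm
  set ω : ℕ → Bool := fun n => decide ((a n).1 = 1) with hω
  set x := lurothSum a with hxdef
  have hzero : (fun n => a (0 + n)) = a := funext fun n => by rw [Nat.zero_add]
  have hx0 : x ∈ Set.Icc c 1 := by have := htails 0; rwa [hzero] at this
  -- the key recursion for each k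
  have hrec' : ∀ k, (((a k).2:ℝ) * (((a k).2:ℝ) - 1)) * lurothSum (fun n => a (k + n))
      = ((a k).2:ℝ) - 1 + ((a k).1:ℝ)
        + (-1:ℝ)^((a k).1) * lurothSum (fun n => a ((k+1) + n)) := by
    intro k
    have hrec := lurothSum_rec (b := fun n => a (k + n))
      (fun n => (ha (k+n)).1) (fun n => (ha (k+n)).2.1)
    have hsh : (fun n => a (k + (1 + n))) = (fun n => a ((k+1) + n)) := by
      funext n; congr 1; omega
    simpa [hsh] using hrec
  have hnd : ∀ k, (a k).1 = 0 → lurothSum (fun n => a ((k+1) + n)) = 1 → (a k).2 = 2 := by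
    intro k hs h1
    by_contra hne
    have hd3 : 3 ≤ (a k).2 := by have := (ha k).2.1; omega
    have hshift : ∀ k' : ℕ, (fun n => a ((k+1) + (k' + n))) = (fun n => a (((k+1) + k') + n)) := by
      intro k'; funext n; congr 1; omega
    have hall := sum_one_all hc0 (b := fun n => a ((k+1) + n))
      (fun n => (ha _).1) (fun n => (ha _).2.1)
      (fun k' => by rw [hshift k']; exact htails ((k+1) + k')) h1
    apply hexcl
    refine ⟨k, (a k).2 - 1, by omega, by have := (ha k).2.2; omega, ?_, ?_⟩
    · have : (a k).2 - 1 + 1 = (a k).2 := by omega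
      rw [this]; exact Prod.ext hs rfl
    · intro n hn
      obtain ⟨m, rfl⟩ : ∃ m, n = (k+1) + m := ⟨n - (k+1), by omega⟩
      exact hall m
  -- main induction
  have key : ∀ k, Tom c ω k x = lurothSum (fun n => a (k + n)) := by
    intro k
    induction k with
    | zero => show x = _; rw [hzero]
    | succ k ih =>
      have hreal := real_step hc0 hc (s := (a k).1) (d := (a k).2) (j := ω k)
        (y := Tom c ω k x) (y' := lurothSum (fun n => a ((k+1) + n)))
        (ha k).1 (ha k).2.1 (by rw [ih]; exact htails k) (htails (k+1))
        (by rw [ih]; exact hrec' k)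
        (hnd k) (by rw [hω])
      exact hreal.2.2
  refine ⟨ω, x, hx0, fun n => ?_⟩
  have hreal := real_step hc0 hc (s := (a n).1) (d := (a n).2) (j := ω n)
    (y := Tom c ω n x) (y' := lurothSum (fun m => a ((n+1) + m)))
    (ha n).1 (ha n).2.1 (by rw [key n]; exact htails n) (htails (n+1))
    (by rw [key n]; exact hrec' n)
    (hnd n) (by rw [hω])
  have h1 : sgn c ω x n = (a n).1 := by
    rw [sgn_eq_sval hc0.ne']; exact hreal.2.1
  have h2 : dig c ω x n = (a n).2 := by
    rw [dig_eq_dval]; exact hreal.1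
  show (sgn c ω x n, dig c ω x n) = a n
  rw [h1, h2]

/-- backward direction. -/
lemma realized_admissible (hc0 : 0 < c) (hc : c ≤ 1/2) {a : ℕ → ℕ × ℕ}
    {ω : ℕ → Bool} {x : ℝ} (hx : x ∈ Set.Icc c 1)
    (hexp : ∀ n, expansion c ω x n = a n) : Admissible c a := by
  have haall : ∀ n, (a n).1 ≤ 1 ∧ 2 ≤ (a n).2 ∧ (a n).2 ≤ ⌈1/c⌉₊ :=
    fun n => (hexp n) ▸ exp_alphabet hc0 hc ω hx n
  refine ⟨haall, ?_, ?_⟩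
  · intro k
    have hsh : (fun n => a (k + n)) = expansion c (fun i => ω (k+i)) (Tom c ω k x) := by
      funext n; rw [← hexp (k+n), expansion_shift]
    rw [hsh, lurothSum_expansion hc0 hc _ (tom_mem hc0 hc ω hx k)]
    exact tom_mem hc0 hc ω hx k
  · rintro ⟨N, d, hd2, hdc, hN, hafter⟩
    have hEN := hexp N; rw [hN] at hEN
    have hsN : sval c (ω N) (Tom c ω N x) = 0 := by
      have h := congrArg Prod.fst hEN; rw [exp_fst hc0] at h; exact h
    have hdN : dval (Tom c ω N x) = d + 1 := by
      have h := congrArg Prod.snd hEN; rw [exp_snd] at h; exact h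
    have hyN := tom_mem hc0 hc ω hx N
    have hstepN := step_lemma hc0 hc (ω N) hyN
    have hyN1 : Tom c ω N x ≠ 1 := by
      intro h; rw [h, dval, if_pos rfl] at hdN; omega
    have hT1 : Tom c ω (N+1) x ≠ 1 := hstepN.2.2.2.2.2 hsN hyN1
    have hrecur : ∀ k, Tom c ω (N+1+k+1) x = 2 * Tom c ω (N+1+k) x - 1 := by
      intro k
      have hn := hexp (N+1+k); rw [hafter (N+1+k) (by omega)] at hn
      have hs : sval c (ω (N+1+k)) (Tom c ω (N+1+k) x) = 0 := by
        have h := congrArg Prod.fst hn; rw [exp_fst hc0] at h; exact h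
      have hdv : dval (Tom c ω (N+1+k) x) = 2 := by
        have h := congrArg Prod.snd hn; rw [exp_snd] at h; exact h
      have hid := (step_lemma hc0 hc (ω (N+1+k)) (tom_mem hc0 hc ω hx (N+1+k))).2.2.2.2.1
      have hTc : Tc (ω (N+1+k)) c (Tom c ω (N+1+k) x) = Tom c ω (N+1+k+1) x := rfl
      rw [hs, hdv, hTc] at hid
      norm_num at hid
      linarith
    have hgrow : ∀ k, 1 - Tom c ω (N+1+k) x = 2^k * (1 - Tom c ω (N+1) x) := by
      intro k
      induction k with
      | zero => norm_num
      | succ k ih =>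
        rw [show N+1+(k+1) = N+1+k+1 from by omega, hrecur k, pow_succ]
        linarith
    have h1 : Tom c ω (N+1) x = 1 := by
      by_contra hne
      have hlt : Tom c ω (N+1) x < 1 :=
        lt_of_le_of_ne (tom_mem hc0 hc ω hx (N+1)).2 hne
      obtain ⟨k, hk⟩ := pow_unbounded_of_one_lt
        ((1 - c)/(1 - Tom c ω (N+1) x)) (by norm_num : (1:ℝ) < 2)
      have hck := (tom_mem hc0 hc ω hx (N+1+k)).1
      have hgk := hgrow k
      have hpos : 0 < 1 - Tom c ω (N+1) x := by linarith
      rw [div_lt_iff₀ hpos] at hk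
      nlinarith
    exact hT1 h1

end Directions

/-- a sequence over the alphabet `𝒜_c` is `c`-Lüroth admissible if and
only if it is the `c`-Lüroth expansion of some point `(ω,x) ∈ {0,1}^ℕ × [c,1]`. -/
theorem admissible_iff_realized (c : ℝ) (hc0 : 0 < c) (hc : c ≤ 1/2)
    (a : ℕ → ℕ × ℕ) (ha : ∀ n, (a n).1 ≤ 1 ∧ 2 ≤ (a n).2 ∧ (a n).2 ≤ ⌈1/c⌉₊) :
    Admissible c a ↔
      ∃ (ω : ℕ → Bool) (x : ℝ), x ∈ Set.Icc c 1 ∧ ∀ n, expansion c ω x n = a n := by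
  constructor
  · exact admissible_realized hc0 hc
  · rintro ⟨ω, x, hx, hexp⟩
    exact realized_admissible hc0 hc hx hexp

end
end
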